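/- arXiv:2204.09305 — 5 statements merged into one kernel-verified Lean document; each statement's English description precedes it below -/
import Mathlib

section
/- Let a_n ≥ 0 and b_n ≥ 0 be sequences with ∑ b_n divergent, and suppose both power series f(x) = ∑ a_n x^n and g(x) = ∑ b_n x^n converge for |x| < 1. If a_n / b_n → C as n → ∞ (with b_n eventually positive), then f(x)/g(x) → C as x → 1⁻. -/
set_option maxHeartbeats 1000000

open Filter

/-- Titchmarsh's Abelian theorem: if `a_n ≥ 0`, `b_n ≥ 0`, `∑ b_n` diverges,
both power series converge on `(-1,1)`, `b_n` is eventually positive and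
`a_n / b_n → C`, then `f(x)/g(x) → C` as `x → 1⁻`. -/
theorem stmt_2 (a b : ℕ → ℝ) (C : ℝ)
    (ha : ∀ n, 0 ≤ a n) (hb : ∀ n, 0 ≤ b n)
    (hbdiv : ¬ Summable b)
    (hbpos : ∀ᶠ n in Filter.atTop, 0 < b n)
    (hfa : ∀ x ∈ Set.Ioo (-1 : ℝ) 1, Summable (fun n => a n * x ^ n))
    (hfb : ∀ x ∈ Set.Ioo (-1 : ℝ) 1, Summable (fun n => b n * x ^ n))
    (hC : Filter.Tendsto (fun n => a n / b n) Filter.atTop (nhds C)) :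
    Filter.Tendsto (fun x : ℝ => (∑' n, a n * x ^ n) / (∑' n, b n * x ^ n))
      (nhdsWithin 1 (Set.Iio 1)) (nhds C) := by
  -- Step 1 : g(x) → ∞ as x → 1⁻
  have key : Tendsto (fun x : ℝ => ∑' n, b n * x ^ n) (nhdsWithin 1 (Set.Iio 1)) atTop := by
    rw [tendsto_atTop]
    intro M
    obtain ⟨K, hK⟩ : ∃ K, M + 1 ≤ ∑ i ∈ Finset.range K, b i := by
      have h := (not_summable_iff_tendsto_nat_atTop_of_nonneg hb).1 hbdiv
      exact (h.eventually_ge_atTop (M + 1)).exists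
    have hcont : Continuous (fun x : ℝ => ∑ i ∈ Finset.range K, b i * x ^ i) :=
      continuous_finset_sum _ fun i _ => (continuous_const.mul (continuous_pow i))
    have h1 : Tendsto (fun x : ℝ => ∑ i ∈ Finset.range K, b i * x ^ i) (nhds 1)
        (nhds (∑ i ∈ Finset.range K, b i)) := by
      simpa using hcont.tendsto 1
    have h2 : ∀ᶠ x in nhds (1 : ℝ), M ≤ ∑ i ∈ Finset.range K, b i * x ^ i :=
      h1.eventually (eventually_ge_nhds (by linarith))
    have h3 : ∀ᶠ x in nhds (1 : ℝ), (0 : ℝ) < x := eventually_gt_nhds one_pos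
    filter_upwards [((h2.and h3).filter_mono nhdsWithin_le_nhds), self_mem_nhdsWithin]
      with x hx hx1
    obtain ⟨hpx, hx0⟩ := hx
    have hxlt : x < 1 := hx1
    calc M ≤ ∑ i ∈ Finset.range K, b i * x ^ i := hpx
      _ ≤ ∑' n, b n * x ^ n :=
        Summable.sum_le_tsum _ (fun i _ => mul_nonneg (hb i) (by positivity)) (hfb x ⟨by linarith, hxlt⟩)
  -- Step 2 : ε-argument
  rw [Metric.tendsto_nhds]
  intro ε hε
  obtain ⟨N, hN⟩ : ∃ N, ∀ n ≥ N, |a n - C * b n| ≤ ε / 2 * b n := by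
    have h1 := (Metric.tendsto_nhds.1 hC (ε / 2) (by linarith)).and hbpos
    rw [Filter.eventually_atTop] at h1
    obtain ⟨N, hN⟩ := h1
    refine ⟨N, fun n hn => ?_⟩
    obtain ⟨hd, hbp⟩ := hN n hn
    rw [Real.dist_eq] at hd
    have heq : a n - C * b n = (a n / b n - C) * b n := by field_simp
    rw [heq, abs_mul, abs_of_pos hbp]
    exact mul_le_mul_of_nonneg_right hd.le hbp.le
  set M0 := ∑ i ∈ Finset.range N, |a i - C * b i| with hM0
  have hM0nn : (0 : ℝ) ≤ M0 := Finset.sum_nonneg fun i _ => abs_nonneg _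
  have hg := key.eventually_ge_atTop (2 * (M0 + 1) / ε)
  have hx01 : ∀ᶠ x in nhdsWithin (1:ℝ) (Set.Iio 1), 0 < x ∧ x < 1 := by
    filter_upwards [(eventually_gt_nhds one_pos).filter_mono nhdsWithin_le_nhds,
      self_mem_nhdsWithin] with x h1 h2
    exact ⟨h1, h2⟩
  filter_upwards [hg, hx01] with x hgx hx
  obtain ⟨hx0, hx1⟩ := hx
  have hmem : x ∈ Set.Ioo (-1 : ℝ) 1 := ⟨by linarith, hx1⟩
  have fa := hfa x hmem
  have fb := hfb x hmem
  set g := ∑' n, b n * x ^ n with hgdef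
  have hgpos : 0 < g := by
    have h2M : (0 : ℝ) < 2 * (M0 + 1) / ε := by positivity
    linarith
  -- summability facts
  have hsum : Summable (fun n => (a n - C * b n) * x ^ n) := by
    have h := fa.sub (fb.mul_left C)
    refine h.congr fun n => ?_
    ring
  have hsabs : Summable (fun n => |a n - C * b n| * x ^ n) := by
    refine hsum.abs.congr fun n => ?_
    rw [abs_mul, abs_pow, abs_of_pos hx0]
  -- f - C*g as a tsum
  have hdiff : (∑' n, a n * x ^ n) - C * g = ∑' n, (a n - C * b n) * x ^ n := by
    rw [hgdef, ← tsum_mul_left, ← Summable.tsum_sub fa (fb.mul_left C)]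
    exact tsum_congr fun n => by ring
  -- |f - C*g| ≤ ∑' |a n - C b n| x^n
  have habs : |∑' n, (a n - C * b n) * x ^ n| ≤ ∑' n, |a n - C * b n| * x ^ n := by
    have h := norm_tsum_le_tsum_norm (f := fun n => (a n - C * b n) * x ^ n)
      (by simpa [Real.norm_eq_abs, abs_mul, abs_pow, abs_of_pos hx0] using hsabs)
    calc |∑' n, (a n - C * b n) * x ^ n| ≤ ∑' n, ‖(a n - C * b n) * x ^ n‖ := h
      _ = ∑' n, |a n - C * b n| * x ^ n := tsum_congr fun n => by
          rw [Real.norm_eq_abs, abs_mul, abs_pow, abs_of_pos hx0]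
  -- split at N
  have hsplit : (∑' n, |a n - C * b n| * x ^ n)
      = (∑ i ∈ Finset.range N, |a i - C * b i| * x ^ i)
        + ∑' i, |a (i + N) - C * b (i + N)| * x ^ (i + N) :=
    (Summable.sum_add_tsum_nat_add N hsabs).symm
  have hhead : (∑ i ∈ Finset.range N, |a i - C * b i| * x ^ i) ≤ M0 := by
    refine Finset.sum_le_sum fun i _ => ?_
    exact mul_le_of_le_one_right (abs_nonneg _) (pow_le_one₀ hx0.le hx1.le)
  have hbtail : Summable (fun i => b (i + N) * x ^ (i + N)) :=
    (summable_nat_add_iff N).2 fb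
  have htail : (∑' i, |a (i + N) - C * b (i + N)| * x ^ (i + N))
      ≤ ε / 2 * ∑' i, b (i + N) * x ^ (i + N) := by
    rw [← tsum_mul_left]
    refine Summable.tsum_le_tsum (fun i => ?_) ((summable_nat_add_iff N).2 hsabs)
      (hbtail.mul_left _)
    have h := hN (i + N) (by omega)
    calc |a (i + N) - C * b (i + N)| * x ^ (i + N)
        ≤ (ε / 2 * b (i + N)) * x ^ (i + N) :=
          mul_le_mul_of_nonneg_right h (by positivity)
      _ = ε / 2 * (b (i + N) * x ^ (i + N)) := by ring
  have htailg : (∑' i, b (i + N) * x ^ (i + N)) ≤ g := by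
    rw [hgdef, ← Summable.sum_add_tsum_nat_add N fb]
    have : (0 : ℝ) ≤ ∑ i ∈ Finset.range N, b i * x ^ i :=
      Finset.sum_nonneg fun i _ => mul_nonneg (hb i) (by positivity)
    linarith
  -- put together
  have hbound : |(∑' n, a n * x ^ n) - C * g| ≤ M0 + ε / 2 * g := by
    rw [hdiff]
    calc |∑' n, (a n - C * b n) * x ^ n| ≤ ∑' n, |a n - C * b n| * x ^ n := habs
      _ = _ + _ := hsplit
      _ ≤ M0 + ε / 2 * ∑' i, b (i + N) * x ^ (i + N) := add_le_add hhead htail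
      _ ≤ M0 + ε / 2 * g := by nlinarith [htailg]
  rw [Real.dist_eq]
  have hrew : (∑' n, a n * x ^ n) / g - C = ((∑' n, a n * x ^ n) - C * g) / g := by
    field_simp
  rw [hrew, abs_div, abs_of_pos hgpos, div_lt_iff₀ hgpos]
  have hεg : M0 + 1 ≤ ε / 2 * g := by
    have := mul_le_mul_of_nonneg_left hgx (le_of_lt (by positivity : (0:ℝ) < ε / 2))
    calc M0 + 1 = ε / 2 * (2 * (M0 + 1) / ε) := by field_simp
      _ ≤ ε / 2 * g := this
  nlinarith [abs_nonneg ((∑' n, a n * x ^ n) - C * g)]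
end

section
/- For a complex constant α not a nonnegative integer, (-1)^n C(α, n) ~ n^{-α-1} / Γ(-α) as n → ∞; that is, the ratio of (-1)^n C(α,n) to n^{-α-1}/Γ(-α) tends to 1. -/
/-- Generalized binomial coefficient `C(z, n) = z(z-1)⋯(z-n+1)/n!` for complex `z`. -/
noncomputable def genBinom (z : ℂ) (n : ℕ) : ℂ :=
  (∏ i ∈ Finset.range n, (z - i)) / (n.factorial : ℂ)

/-- `(-1)^n C(α,n) ∼ n^{-α-1}/Γ(-α)` as `n → ∞`, when `α` is not a nonnegative integer. -/
theorem stmt_4 (α : ℂ) (h : ∀ m : ℕ, α ≠ m) :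
    Filter.Tendsto
      (fun n : ℕ => ((-1) ^ n * genBinom α n) / ((n : ℂ) ^ (-α - 1) / Complex.Gamma (-α)))
      Filter.atTop (nhds 1) := by
  set z : ℂ := -α with hzdef
  have hz : ∀ m : ℕ, z ≠ -m := by
    intro m hm
    exact h m (by have := congrArg Neg.neg hm; simpa [hzdef] using this)
  have hΓ : Complex.Gamma z ≠ 0 := Complex.Gamma_ne_zero hz
  -- auxiliary limit : n/(z+n) → 1
  have hinv : Filter.Tendsto (fun n : ℕ => (n : ℂ)⁻¹) Filter.atTop (nhds 0) := by
    have := (Complex.continuous_ofReal.tendsto 0).comp tendsto_inv_atTop_nhds_zero_nat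
    simpa [Function.comp_def] using this
  have hfrac : Filter.Tendsto (fun n : ℕ => (n : ℂ) / (z + n)) Filter.atTop (nhds 1) := by
    have h1 : Filter.Tendsto (fun n : ℕ => (z * (n : ℂ)⁻¹ + 1)⁻¹) Filter.atTop (nhds 1) := by
      have := ((hinv.const_mul z).add_const 1).inv₀ (by simp)
      simpa using this
    refine h1.congr' ?_
    filter_upwards [Filter.eventually_gt_atTop 0] with n hn
    have hn0 : (n : ℂ) ≠ 0 := Nat.cast_ne_zero.mpr hn.ne'
    field_simp
  have hGS : Filter.Tendsto (fun n : ℕ => (Complex.GammaSeq z n)⁻¹) Filter.atTop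
      (nhds (Complex.Gamma z)⁻¹) := (Complex.GammaSeq_tendsto_Gamma z).inv₀ hΓ
  have hmain : Filter.Tendsto
      (fun n : ℕ => Complex.Gamma z * ((n : ℂ) / (z + n)) * (Complex.GammaSeq z n)⁻¹)
      Filter.atTop (nhds 1) := by
    have := ((hfrac.const_mul (Complex.Gamma z)).mul hGS)
    simpa [mul_inv_cancel₀ hΓ] using this
  refine hmain.congr' ?_
  filter_upwards [Filter.eventually_gt_atTop 0] with n hn
  have hn0 : (n : ℂ) ≠ 0 := Nat.cast_ne_zero.mpr hn.ne'
  have hfac : ((n.factorial : ℕ) : ℂ) ≠ 0 := Nat.cast_ne_zero.mpr n.factorial_ne_zero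
  have hP : ∀ m : ℕ, (m : ℕ) < n + 1 → z + m ≠ 0 := by
    intro m _ hm
    exact hz m (by linear_combination hm)
  have hProd : (∏ j ∈ Finset.range (n + 1), (z + j)) ≠ 0 :=
    Finset.prod_ne_zero_iff.mpr fun m hm => hP m (Finset.mem_range.mp hm)
  have hProd' : (∏ j ∈ Finset.range n, (z + j)) ≠ 0 :=
    Finset.prod_ne_zero_iff.mpr fun m hm => hP m (Nat.lt_succ_of_lt (Finset.mem_range.mp hm))
  have hGSne : Complex.GammaSeq z n ≠ 0 := by
    rw [Complex.GammaSeq]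
    refine div_ne_zero (mul_ne_zero ?_ hfac) hProd
    simp [Complex.cpow_eq_zero_iff, hn0]
  -- rewrite the product: (-1)^n ∏ (α - i) = ∏ (z + i)
  have hprod_eq : (-1 : ℂ) ^ n * (∏ i ∈ Finset.range n, (α - i)) =
      ∏ i ∈ Finset.range n, (z + i) := by
    rw [show ((-1 : ℂ)) ^ n = ∏ _i ∈ Finset.range n, (-1 : ℂ) by simp, ← Finset.prod_mul_distrib]
    refine Finset.prod_congr rfl fun i _ => ?_
    simp [hzdef]; ring
  have hcpow : (n : ℂ) ^ (-α - 1) = (n : ℂ) ^ z / (n : ℂ) := by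
    rw [show -α - 1 = z - 1 by rw [hzdef], Complex.cpow_sub _ _ hn0, Complex.cpow_one]
  have hcpow_ne : (n : ℂ) ^ z ≠ 0 := by
    simp [Complex.cpow_eq_zero_iff, hn0]
  have hsplit : (∏ j ∈ Finset.range (n + 1), (z + j)) =
      (∏ j ∈ Finset.range n, (z + j)) * (z + n) := Finset.prod_range_succ _ _
  show Complex.Gamma z * ((n : ℂ) / (z + n)) * (Complex.GammaSeq z n)⁻¹ =
    ((-1) ^ n * genBinom α n) / ((n : ℂ) ^ (-α - 1) / Complex.Gamma (-α))
  rw [genBinom, ← hzdef, hcpow, Complex.GammaSeq, hsplit, mul_comm ((-1:ℂ)^n)]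
  rw [div_mul_eq_mul_div, mul_comm _ ((-1:ℂ)^n), ← mul_div_assoc, hprod_eq]
  have hzn : z + (n : ℂ) ≠ 0 := hP n (Nat.lt_succ_self n)
  field_simp
end

section
/- The integral operator (Tu)(x) = ∫₀^∞ K(t) u(t)/(t + x) dt, with K(t) = (1/π) exp(-t^β sin(πβ/2)) sin(t^β cos(πβ/2)) and 0 < β < 1, is a Hilbert–Schmidt (hence compact) operator on L²[0, ∞); i.e., the kernel K(t)/(t+x) is square-integrable on [0,∞)×[0,∞). -/
open MeasureTheory

/-- The Freud-model kernel `K(t) = (1/π) e^{-t^β sin(πβ/2)} sin(t^β cos(πβ/2))`. -/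
noncomputable def freudKer (β t : ℝ) : ℝ :=
  (1 / Real.pi) * Real.exp (-t ^ β * Real.sin (Real.pi * β / 2)) *
    Real.sin (t ^ β * Real.cos (Real.pi * β / 2))

lemma cube_le_exp {u : ℝ} (hu : 0 ≤ u) : u ^ 3 ≤ 27 * Real.exp u := by
  have h1 : u / 3 ≤ Real.exp (u / 3) := by
    have := Real.add_one_le_exp (u / 3); linarith
  have h2 : (u / 3) ^ 3 ≤ Real.exp (u / 3) ^ 3 := pow_le_pow_left₀ (by positivity) h1 3
  have h3 : Real.exp (u / 3) ^ 3 = Real.exp u := by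
    rw [← Real.exp_nat_mul]; congr 1; push_cast; ring
  rw [h3] at h2
  nlinarith [h2]

lemma inner_integral (t : ℝ) (ht : 0 < t) :
    IntegrableOn (fun x : ℝ => ((t + x) ^ 2)⁻¹) (Set.Ioi 0) ∧
      ∫ x in Set.Ioi (0:ℝ), ((t + x) ^ 2)⁻¹ = t⁻¹ := by
  have hemb : MeasurableEmbedding (fun x : ℝ => t + x) :=
    (Homeomorph.addLeft t).measurableEmbedding
  have hmp : MeasurePreserving (fun x : ℝ => t + x) volume volume :=
    measurePreserving_add_left volume t
  have hpre : (fun x : ℝ => t + x) ⁻¹' Set.Ioi t = Set.Ioi 0 := by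
    ext x; simp
  have hint : IntegrableOn (fun y : ℝ => y ^ (-2 : ℝ)) (Set.Ioi t) :=
    integrableOn_Ioi_rpow_of_lt (by norm_num) ht
  have heq : ∀ x : ℝ, x ∈ Set.Ioi (0:ℝ) → (t + x) ^ (-2 : ℝ) = ((t + x) ^ 2)⁻¹ := by
    intro x hx
    rw [show (-2 : ℝ) = ((-2 : ℤ) : ℝ) by norm_num, Real.rpow_intCast]
    norm_num [zpow_neg, zpow_ofNat]
  have h1 : IntegrableOn (fun x : ℝ => (t + x) ^ (-2 : ℝ)) (Set.Ioi 0) := by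
    have := (hmp.integrableOn_comp_preimage hemb).2 hint
    rwa [hpre] at this
  constructor
  · exact h1.congr_fun heq measurableSet_Ioi
  · calc ∫ x in Set.Ioi (0:ℝ), ((t + x) ^ 2)⁻¹
        = ∫ x in Set.Ioi (0:ℝ), (t + x) ^ (-2:ℝ) :=
          (setIntegral_congr_fun measurableSet_Ioi (fun x hx => heq x hx)).symm
      _ = ∫ y in Set.Ioi t, y ^ (-2:ℝ) := by
          rw [← hpre]
          exact hmp.setIntegral_preimage_emb hemb (fun y => y ^ (-2:ℝ)) (Set.Ioi t)
      _ = t⁻¹ := by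
          rw [integral_Ioi_rpow_of_lt (by norm_num) ht]
          norm_num [Real.rpow_neg_one]

lemma freudKer_abs_le (β t : ℝ) (ht : 0 ≤ t) :
    |freudKer β t| ≤
      Real.pi⁻¹ * (Real.exp (-t ^ β * Real.sin (Real.pi * β / 2)) * t ^ β) := by
  have hπ := Real.pi_pos
  have hu : 0 ≤ t ^ β := Real.rpow_nonneg ht β
  have hE : (0:ℝ) < Real.exp (-t ^ β * Real.sin (Real.pi * β / 2)) := Real.exp_pos _
  unfold freudKer
  rw [abs_mul, abs_mul, abs_of_pos hE,
    abs_of_pos (show (0:ℝ) < 1/Real.pi by positivity), one_div]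
  have h3 : |Real.sin (t ^ β * Real.cos (Real.pi * β / 2))| ≤ t ^ β := by
    refine Real.abs_sin_le_abs.trans ?_
    rw [abs_mul, abs_of_nonneg hu]
    have := Real.abs_cos_le_one (Real.pi * β / 2)
    nlinarith
  have hc : 0 ≤ Real.pi⁻¹ * Real.exp (-t ^ β * Real.sin (Real.pi * β / 2)) := by positivity
  nlinarith [mul_le_mul_of_nonneg_left h3 hc]

lemma freudKer_sq_mul_inv_le (β : ℝ) (t : ℝ) (ht : 0 < t) :
    freudKer β t ^ 2 * t⁻¹ ≤
      Real.pi⁻¹ ^ 2 *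
        (t ^ (2*β - 1) * Real.exp (-(2 * Real.sin (Real.pi * β / 2)) * t ^ β)) := by
  set s := Real.sin (Real.pi * β / 2) with hsdef
  have habs := freudKer_abs_le β t ht.le
  have hsq : freudKer β t ^ 2 ≤ (Real.pi⁻¹ * (Real.exp (-t ^ β * s) * t ^ β)) ^ 2 := by
    rw [← sq_abs]
    exact pow_le_pow_left₀ (abs_nonneg _) habs 2
  have hexp : Real.exp (-t ^ β * s) ^ 2 = Real.exp (-(2*s) * t ^ β) := by
    rw [← Real.exp_nat_mul]; congr 1; push_cast; ring
  have hpow : (t ^ β) ^ (2:ℕ) * t⁻¹ = t ^ (2*β - 1) := by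
    rw [← Real.rpow_natCast (t ^ β) 2, ← Real.rpow_mul ht.le, ← Real.rpow_neg_one t,
      ← Real.rpow_add ht]
    congr 1; push_cast; ring
  calc freudKer β t ^ 2 * t⁻¹
      ≤ (Real.pi⁻¹ * (Real.exp (-t ^ β * s) * t ^ β)) ^ 2 * t⁻¹ :=
        mul_le_mul_of_nonneg_right hsq (inv_nonneg.mpr ht.le)
    _ = Real.pi⁻¹ ^ 2 * (Real.exp (-t ^ β * s) ^ 2 * ((t ^ β) ^ (2:ℕ) * t⁻¹)) := by ring
    _ = _ := by rw [hexp, hpow]; ring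

lemma outer_integrable (β : ℝ) (hβ : β ∈ Set.Ioo (0:ℝ) 1) :
    IntegrableOn
      (fun t : ℝ => t ^ (2*β - 1) * Real.exp (-(2 * Real.sin (Real.pi * β / 2)) * t ^ β))
      (Set.Ioi 0) := by
  obtain ⟨hβ0, hβ1⟩ := hβ
  set s := Real.sin (Real.pi * β / 2) with hsdef
  have hs : 0 < s := Real.sin_pos_of_pos_of_lt_pi (by positivity)
    (by nlinarith [Real.pi_pos])
  have hcontH : ContinuousOn (fun t : ℝ => t ^ (2*β-1) * Real.exp (-(2*s) * t ^ β))
      (Set.Ioi 0) := by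
    intro x hx
    have h1 : ContinuousAt (fun t : ℝ => t ^ (2*β-1)) x :=
      Real.continuousAt_rpow_const x _ (Or.inl (ne_of_gt hx))
    have h2 : ContinuousAt (fun t : ℝ => t ^ β) x :=
      Real.continuousAt_rpow_const x _ (Or.inr hβ0.le)
    exact (h1.mul (Real.continuous_exp.continuousAt.comp
      (continuousAt_const.mul h2))).continuousWithinAt
  rw [show Set.Ioi (0:ℝ) = Set.Ioc 0 1 ∪ Set.Ioi 1 from (Set.Ioc_union_Ioi_eq_Ioi zero_le_one).symm]
  refine IntegrableOn.union ?_ ?_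
  · have hint : IntegrableOn (fun t : ℝ => t ^ (2*β - 1)) (Set.Ioc 0 1) := by
      have := intervalIntegral.intervalIntegrable_rpow' (a := 0) (b := 1) (r := 2*β-1)
        (by linarith)
      rwa [intervalIntegrable_iff_integrableOn_Ioc_of_le zero_le_one] at this
    refine Integrable.mono' hint
      ((hcontH.mono Set.Ioc_subset_Ioi_self).aestronglyMeasurable measurableSet_Ioc) ?_
    filter_upwards [ae_restrict_mem measurableSet_Ioc] with t ht
    have ht0 : 0 < t := ht.1
    have h1 : Real.exp (-(2*s) * t ^ β) ≤ 1 := by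
      rw [Real.exp_le_one_iff]
      have : 0 ≤ t ^ β := Real.rpow_nonneg ht0.le β
      nlinarith
    have h2 : 0 ≤ t ^ (2*β-1) := Real.rpow_nonneg ht0.le _
    rw [Real.norm_eq_abs, abs_of_nonneg (by positivity)]
    nlinarith
  · have hint : IntegrableOn (fun t : ℝ => 27 * ((2*s)⁻¹)^3 * t ^ (-β - 1)) (Set.Ioi 1) :=
      (integrableOn_Ioi_rpow_of_lt (by linarith) one_pos).const_mul _
    refine Integrable.mono' hint
      ((hcontH.mono (Set.Ioi_subset_Ioi zero_le_one)).aestronglyMeasurable measurableSet_Ioi) ?_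
    filter_upwards [ae_restrict_mem measurableSet_Ioi] with t ht
    have ht1 : (1:ℝ) < t := ht
    have ht0 : (0:ℝ) < t := lt_trans one_pos ht1
    have hu : 0 < t ^ β := Real.rpow_pos_of_pos ht0 β
    have hcube : (2*s*t^β)^3 ≤ 27 * Real.exp (2*s*t^β) := cube_le_exp (by positivity)
    have key : Real.exp (-(2*s) * t^β) ≤ 27 / (2*s*t^β)^3 := by
      rw [show -(2*s) * t^β = -(2*s*t^β) by ring, Real.exp_neg,
        le_div_iff₀ (by positivity), inv_mul_le_iff₀ (Real.exp_pos _)]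
      nlinarith [hcube]
    rw [Real.norm_eq_abs, abs_of_nonneg (by positivity)]
    have h1 : (t^β)^(3:ℕ) = t^(β*3) := by
      rw [← Real.rpow_natCast (t^β) 3, ← Real.rpow_mul ht0.le]
      norm_num
    have h2 : t^(2*β-1) * (t^(β*3))⁻¹ = t^(-β-1) := by
      rw [← Real.rpow_neg ht0.le, ← Real.rpow_add ht0]; congr 1; ring
    have h3 : t^(2*β-1) * Real.exp (-(2*s)*t^β) ≤ t^(2*β-1) * (27/(2*s*t^β)^3) :=
      mul_le_mul_of_nonneg_left key (Real.rpow_nonneg ht0.le _)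
    have h4 : t^(2*β-1) * (27/(2*s*t^β)^3) = 27 * ((2*s)⁻¹)^3 * t^(-β-1) := by
      rw [mul_pow, mul_pow, div_eq_mul_inv, mul_inv, mul_inv, h1]
      rw [← h2]
      field_simp
    linarith [h3, h4]

/-- The kernel `K(t)/(t+x)` of the operator `T` is square-integrable on
`[0,∞) × [0,∞)`, so `T` is Hilbert–Schmidt on `L²[0,∞)`. -/
theorem stmt_13 (β : ℝ) (hβ : β ∈ Set.Ioo (0 : ℝ) 1) :
    Integrable (fun p : ℝ × ℝ => (freudKer β p.1 / (p.1 + p.2)) ^ 2)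
      ((volume.restrict (Set.Ioi (0 : ℝ))).prod (volume.restrict (Set.Ioi (0 : ℝ)))) := by
  obtain ⟨hβ0, hβ1⟩ := hβ
  have hπ := Real.pi_pos
  have hrw : ∀ t x : ℝ, (freudKer β t / (t+x))^2 = freudKer β t ^ 2 * ((t+x)^2)⁻¹ := by
    intro t x; rw [div_pow, div_eq_mul_inv]
  have hcont : Continuous (freudKer β) := by
    have h1 : Continuous fun t : ℝ => t ^ β :=
      continuous_iff_continuousAt.mpr fun x => Real.continuousAt_rpow_const x β (Or.inr hβ0.le)
    unfold freudKer
    exact (continuous_const.mul (Real.continuous_exp.comp (h1.neg.mul continuous_const))).mul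
      (Real.continuous_sin.comp (h1.mul continuous_const))
  have hmeas : AEStronglyMeasurable (fun p : ℝ × ℝ => (freudKer β p.1 / (p.1 + p.2)) ^ 2)
      ((volume.restrict (Set.Ioi (0 : ℝ))).prod (volume.restrict (Set.Ioi (0 : ℝ)))) :=
    ((((hcont.comp continuous_fst).measurable).div
      (measurable_fst.add measurable_snd)).pow_const 2).aestronglyMeasurable
  rw [integrable_prod_iff hmeas]
  constructor
  · filter_upwards [ae_restrict_mem measurableSet_Ioi] with t ht
    have ht0 : (0:ℝ) < t := ht
    simp_rw [hrw]
    exact ((inner_integral t ht0).1.const_mul _)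
  · have houter : IntegrableOn (fun t : ℝ => freudKer β t ^ 2 * t⁻¹) (Set.Ioi 0) := by
      refine Integrable.mono'
        ((outer_integrable β ⟨hβ0, hβ1⟩).const_mul (Real.pi⁻¹ ^ 2)) ?_ ?_
      · exact ((hcont.measurable.pow_const 2).mul measurable_inv).aestronglyMeasurable.restrict
      · filter_upwards [ae_restrict_mem measurableSet_Ioi] with t ht
        have ht0 : (0:ℝ) < t := ht
        rw [Real.norm_eq_abs, abs_of_nonneg (by positivity)]
        exact freudKer_sq_mul_inv_le β t ht0
    refine houter.congr ?_
    filter_upwards [ae_restrict_mem measurableSet_Ioi] with t ht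
    have ht0 : (0:ℝ) < t := ht
    have hn : ∀ x : ℝ, ‖(freudKer β t / (t+x))^2‖ = freudKer β t ^ 2 * ((t+x)^2)⁻¹ := by
      intro x
      rw [Real.norm_eq_abs, abs_of_nonneg (sq_nonneg _), hrw]
    simp_rw [hn]
    rw [integral_const_mul, (inner_integral t ht0).2]
end

section
/- The constants γ_{k,s} = ∫₀^∞ (ln t)^k / (t+1)^{s+2} dt satisfy γ_{0,s} = 1/(s+1) and γ_{1,s} = -(1/(s+1)) ∑_{i=1}^{s} 1/i for every natural number s. -/
open MeasureTheory

/-- `γ_{k,s} = ∫₀^∞ (ln t)^k / (t+1)^{s+2} dt`. -/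
noncomputable def gammaKS (k s : ℕ) : ℝ :=
  ∫ t in Set.Ioi (0 : ℝ), (Real.log t) ^ k / (t + 1) ^ (s + 2)

open Filter Topology Set

noncomputable def auxF (s : ℕ) (t : ℝ) : ℝ :=
  (1/((s:ℝ)+1)) * ((∑ i ∈ Finset.Icc 1 s, (1/(i:ℝ)) * ((t+1)^i)⁻¹)
    - Real.log t * (((t+1)^(s+1))⁻¹ - 1) - Real.log (t+1))

lemma key_alg (s : ℕ) {t : ℝ} (ht : 0 < t) :
    ∑ i ∈ Finset.Icc 1 s, ((t+1:ℝ)^(i+1))⁻¹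
      = -((((t+1:ℝ)^(s+1))⁻¹ - 1)/t + (t+1)⁻¹) := by
  have h1 : t + 1 ≠ 0 := by positivity
  induction s with
  | zero => simp; field_simp; ring
  | succ n ih =>
    rw [Finset.sum_Icc_succ_top (by omega), ih]
    have h2 : (t+1:ℝ)^(n+1) ≠ 0 := pow_ne_zero _ h1
    field_simp
    ring

lemma hasDerivAt_auxF (s : ℕ) {t : ℝ} (ht : 0 < t) :
    HasDerivAt (auxF s) (Real.log t / (t+1)^(s+2)) t := by
  have h1 : (0:ℝ) < t + 1 := by positivity
  have h1' : (t:ℝ) + 1 ≠ 0 := h1.ne'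
  have hpow : ∀ n : ℕ, HasDerivAt (fun t : ℝ => (t+1)^n) ((n:ℝ)*(t+1)^(n-1)*1) t :=
    fun n => ((hasDerivAt_id t).add_const 1).pow n
  have hinv : ∀ n : ℕ, HasDerivAt (fun t : ℝ => ((t+1)^n)⁻¹)
      (-((n:ℝ)*(t+1)^(n-1)*1)/((t+1)^n)^2) t :=
    fun n => (hpow n).inv (pow_ne_zero _ h1')
  have hsum : HasDerivAt (fun t : ℝ => ∑ i ∈ Finset.Icc 1 s, (1/(i:ℝ)) * ((t+1)^i)⁻¹)
      (∑ i ∈ Finset.Icc 1 s, -(((t+1:ℝ)^(i+1))⁻¹)) t := by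
    have : ∀ i ∈ Finset.Icc 1 s, HasDerivAt (fun t : ℝ => (1/(i:ℝ)) * ((t+1)^i)⁻¹)
        (-(((t+1:ℝ)^(i+1))⁻¹)) t := by
      intro i hi
      have hi1 : 1 ≤ i := (Finset.mem_Icc.1 hi).1
      have := (hinv i).const_mul (1/(i:ℝ))
      convert this using 1
      · rfl
      · rfl
      have hine : (i:ℝ) ≠ 0 := Nat.cast_ne_zero.2 (by omega)
      have hexp : (i - 1) + (i + 1) = 2 * i := by omega
      have hp : (t+1:ℝ)^(i-1) * (t+1)^(i+1) = ((t+1)^i)^2 := by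
        rw [← pow_add, hexp, ← pow_mul, mul_comm 2 i, pow_mul]
      field_simp
      nlinarith [pow_ne_zero (i+1) h1', sq_nonneg ((t+1:ℝ)^i)]
    exact HasDerivAt.fun_sum this
  have hlog : HasDerivAt Real.log t⁻¹ t := Real.hasDerivAt_log ht.ne'
  have hlogt1 : HasDerivAt (fun t : ℝ => Real.log (t+1)) (1/(t+1)) t := by
    simpa using ((hasDerivAt_id t).add_const 1).log h1'
  have hprod : HasDerivAt (fun t : ℝ => Real.log t * (((t+1)^(s+1))⁻¹ - 1))
      (t⁻¹ * (((t+1)^(s+1))⁻¹ - 1)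
        + Real.log t * (-(((s+1:ℕ):ℝ)*(t+1)^((s+1)-1)*1)/((t+1)^(s+1))^2)) t :=
    hlog.mul ((hinv (s+1)).sub_const 1)
  have htot := ((hsum.sub hprod).sub hlogt1).const_mul (1/((s:ℝ)+1))
  convert htot using 1
  · rfl
  · rfl
  · rfl
  rw [Finset.sum_neg_distrib, key_alg s ht]
  have hs : ((s:ℝ)+1) ≠ 0 := by positivity
  have h2 : (t+1:ℝ)^(s+1) ≠ 0 := pow_ne_zero _ h1'
  have h3 : (t+1:ℝ)^(s+2) ≠ 0 := pow_ne_zero _ h1'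
  have hcast : (((s+1:ℕ)):ℝ) = (s:ℝ)+1 := by push_cast; ring
  simp only [Nat.add_sub_cancel, hcast]
  have hp1 : (t+1:ℝ)^(s+2) = (t+1)^(s+1) * (t+1) := by rw [← pow_succ]
  have hp2 : ((t+1:ℝ)^(s+1))^2 = (t+1)^(s+2) * (t+1)^s := by
    rw [← pow_mul, ← pow_add]; congr 1; omega
  field_simp
  ring_nf

lemma tendsto_auxF_atTop (s : ℕ) : Tendsto (auxF s) atTop (𝓝 0) := by
  have h1 : Tendsto (fun t : ℝ => ∑ i ∈ Finset.Icc 1 s, (1/(i:ℝ)) * ((t+1)^i)⁻¹)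
      atTop (𝓝 0) := by
    have : Tendsto (fun t : ℝ => ∑ i ∈ Finset.Icc 1 s, (1/(i:ℝ)) * ((t+1)^i)⁻¹)
        atTop (𝓝 (∑ i ∈ Finset.Icc 1 s, (0:ℝ))) := by
      refine tendsto_finset_sum _ fun i hi => ?_
      have hi1 : i ≠ 0 := by have := (Finset.mem_Icc.1 hi).1; omega
      have hpow : Tendsto (fun t : ℝ => (t+1)^i) atTop atTop :=
        (tendsto_pow_atTop hi1).comp (tendsto_atTop_add_const_right _ 1 tendsto_id)
      simpa using (hpow.inv_tendsto_atTop).const_mul (1/(i:ℝ))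
    simpa using this
  have hA : Tendsto (fun t : ℝ => Real.log t * ((t+1)^(s+1))⁻¹) atTop (𝓝 0) := by
    have hd : Tendsto (fun t : ℝ => Real.log t / t) atTop (𝓝 0) := by
      have := (isLittleO_log_rpow_atTop one_pos).tendsto_div_nhds_zero
      simpa [Real.rpow_one] using this
    refine squeeze_zero_norm' ?_ hd
    filter_upwards [eventually_ge_atTop (1:ℝ)] with t ht
    have ht0 : (0:ℝ) < t := lt_of_lt_of_le one_pos ht
    have hlog : 0 ≤ Real.log t := Real.log_nonneg ht
    have hp : t ≤ (t+1)^(s+1) := by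
      calc t ≤ t + 1 := by linarith
      _ = (t+1)^1 := (pow_one _).symm
      _ ≤ (t+1)^(s+1) := pow_le_pow_right₀ (by linarith) (by omega)
    have hppos : (0:ℝ) < (t+1)^(s+1) := by positivity
    rw [Real.norm_eq_abs, abs_mul, abs_of_nonneg hlog, abs_of_nonneg (by positivity : (0:ℝ) ≤ ((t+1)^(s+1))⁻¹)]
    rw [div_eq_mul_inv]
    exact mul_le_mul_of_nonneg_left (by
      exact inv_anti₀ ht0 hp) hlog
  have hB : Tendsto (fun t : ℝ => Real.log (t+1) - Real.log t) atTop (𝓝 0) := by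
    have hq : Tendsto (fun t : ℝ => (t+1)/t) atTop (𝓝 1) := by
      have h' : Tendsto (fun t : ℝ => 1 + t⁻¹) atTop (𝓝 (1 + 0)) :=
        tendsto_const_nhds.add tendsto_inv_atTop_zero
      rw [add_zero] at h'
      refine Filter.Tendsto.congr' ?_ h'
      filter_upwards [eventually_gt_atTop (0:ℝ)] with t ht
      field_simp
    have hc : Tendsto (fun t : ℝ => Real.log ((t+1)/t)) atTop (𝓝 0) := by
      have := (Real.continuousAt_log one_ne_zero).tendsto.comp hq
      simpa [Function.comp_def] using this
    refine Filter.Tendsto.congr' ?_ hc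
    filter_upwards [eventually_gt_atTop (0:ℝ)] with t ht
    rw [Real.log_div (by linarith) ht.ne']
  have htot := (((h1.sub hA).sub hB).const_mul (1/((s:ℝ)+1)))
  have h2 : Tendsto (fun t : ℝ => (1/((s:ℝ)+1)) * ((∑ i ∈ Finset.Icc 1 s, (1/(i:ℝ)) * ((t+1)^i)⁻¹)
      - Real.log t * ((t+1)^(s+1))⁻¹ - (Real.log (t+1) - Real.log t))) atTop (𝓝 0) := by
    simpa using htot
  refine Filter.Tendsto.congr' ?_ h2
  filter_upwards [eventually_gt_atTop (0:ℝ)] with t ht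
  unfold auxF
  ring

lemma continuousWithinAt_auxF (s : ℕ) : ContinuousWithinAt (auxF s) (Ici 0) 0 := by
  rw [← continuousWithinAt_Ioi_iff_Ici]
  unfold ContinuousWithinAt
  have hval : auxF s 0 = (1/((s:ℝ)+1)) * ∑ i ∈ Finset.Icc 1 s, (1/(i:ℝ)) := by
    unfold auxF
    simp [Real.log_zero, Real.log_one]
  rw [hval]
  have p1 : Tendsto (fun t : ℝ => ∑ i ∈ Finset.Icc 1 s, (1/(i:ℝ)) * ((t+1)^i)⁻¹)
      (𝓝[>] (0:ℝ)) (𝓝 (∑ i ∈ Finset.Icc 1 s, (1/(i:ℝ)))) := by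
    refine tendsto_finset_sum _ fun i hi => ?_
    have hca : ContinuousAt (fun t : ℝ => (1/(i:ℝ)) * ((t+1)^i)⁻¹) 0 :=
      continuousAt_const.mul ((((continuous_id.add continuous_const).pow i).continuousAt).inv₀
        (by norm_num))
    simpa using hca.tendsto.mono_left nhdsWithin_le_nhds
  have p2 : Tendsto (fun t : ℝ => Real.log (t+1)) (𝓝[>] (0:ℝ)) (𝓝 0) := by
    have hc : ContinuousAt (fun t : ℝ => Real.log (t+1)) 0 := by
      have h := Real.continuousAt_log (x := (0:ℝ)+1) (by norm_num)
      exact ContinuousAt.comp (x := (0:ℝ)) (f := fun t : ℝ => t + 1) h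
        ((continuous_add_right (1:ℝ)).continuousAt)
    have h0 : Real.log ((0:ℝ)+1) = 0 := by norm_num
    simpa [h0] using hc.tendsto.mono_left nhdsWithin_le_nhds
  have p3 : Tendsto (fun t : ℝ => Real.log t * (((t+1)^(s+1))⁻¹ - 1)) (𝓝[>] (0:ℝ)) (𝓝 0) := by
    have hder : HasDerivAt (fun x : ℝ => ((x+1)^(s+1))⁻¹)
        (-(((s+1:ℕ):ℝ)*((0:ℝ)+1)^((s+1)-1)*1)/(((0:ℝ)+1)^(s+1))^2) 0 :=
      (((hasDerivAt_id (0:ℝ)).add_const 1).pow (s+1)).inv (by norm_num)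
    have hslope := hasDerivAt_iff_tendsto_slope.mp hder
    have hslope' : Tendsto (slope (fun x : ℝ => ((x+1)^(s+1))⁻¹) 0) (𝓝[>] (0:ℝ))
        (𝓝 (-(((s+1:ℕ):ℝ)*((0:ℝ)+1)^((s+1)-1)*1)/(((0:ℝ)+1)^(s+1))^2)) :=
      hslope.mono_left (nhdsWithin_mono 0 fun x hx => ne_of_gt hx)
    have htlog : Tendsto (fun t : ℝ => Real.log t * t) (𝓝[>] (0:ℝ)) (𝓝 0) := by
      have := tendsto_log_mul_rpow_nhdsGT_zero one_pos
      refine this.congr' ?_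
      filter_upwards [self_mem_nhdsWithin] with t ht
      rw [Real.rpow_one]
    have hmul := htlog.mul hslope'
    rw [zero_mul] at hmul
    refine Filter.Tendsto.congr' ?_ hmul
    filter_upwards [self_mem_nhdsWithin] with t (ht : 0 < t)
    rw [slope_def_field]
    simp only [sub_zero, zero_add, one_pow]
    field_simp
  have htot := ((p1.sub p3).sub p2).const_mul (1/((s:ℝ)+1))
  have heq : (1/((s:ℝ)+1)) * ∑ i ∈ Finset.Icc 1 s, (1/(i:ℝ))
      = (1/((s:ℝ)+1)) * ((∑ i ∈ Finset.Icc 1 s, (1/(i:ℝ))) - 0 - 0) := by ring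
  rw [heq]
  exact htot

lemma auxF_zero (s : ℕ) :
    auxF s 0 = (1/((s:ℝ)+1)) * ∑ i ∈ Finset.Icc 1 s, (1/(i:ℝ)) := by
  unfold auxF
  simp

/-- `γ_{0,s} = 1/(s+1)` and `γ_{1,s} = -(1/(s+1)) ∑_{i=1}^s 1/i`. -/
theorem stmt_17 (s : ℕ) :
    gammaKS 0 s = 1 / ((s : ℝ) + 1) ∧
    gammaKS 1 s = -(1 / ((s : ℝ) + 1)) * ∑ i ∈ Finset.Icc 1 s, (1 / (i : ℝ)) := by
  constructor
  · -- part 0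
    have hder : ∀ x ∈ Ici (0:ℝ),
        HasDerivAt (fun t : ℝ => -((1/((s:ℝ)+1)) * ((t+1)^(s+1))⁻¹)) (1/(x+1)^(s+2)) x := by
      intro x hx
      have hx1 : (0:ℝ) < x + 1 := by simp only [mem_Ici] at hx; linarith
      have h1' : x + 1 ≠ 0 := hx1.ne'
      have hraw := (((((hasDerivAt_id x).add_const 1).pow (s+1)).inv
        (pow_ne_zero _ h1')).const_mul (1/((s:ℝ)+1))).neg
      convert hraw using 1
      · rfl
      · rfl
      · rfl
      have hs : ((s:ℝ)+1) ≠ 0 := by positivity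
      have h2 : (x+1:ℝ)^(s+1) ≠ 0 := pow_ne_zero _ h1'
      have h3 : (x+1:ℝ)^(s+2) ≠ 0 := pow_ne_zero _ h1'
      have hcast : (((s+1:ℕ)):ℝ) = (s:ℝ)+1 := by push_cast; ring
      simp only [Nat.add_sub_cancel, hcast, id, Pi.pow_apply]
      have hp2 : ((x+1:ℝ)^(s+1))^2 = (x+1)^(s+2) * (x+1)^s := by
        rw [← pow_mul, ← pow_add]; congr 1; omega
      field_simp
      ring_nf
    have hnn : ∀ x ∈ Ioi (0:ℝ), 0 ≤ 1/(x+1)^(s+2) := by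
      intro x hx
      have : (0:ℝ) < x := hx
      positivity
    have htop : Tendsto (fun t : ℝ => -((1/((s:ℝ)+1)) * ((t+1)^(s+1))⁻¹)) atTop (𝓝 0) := by
      have hpow : Tendsto (fun t : ℝ => (t+1)^(s+1)) atTop atTop :=
        (tendsto_pow_atTop (by omega)).comp (tendsto_atTop_add_const_right _ 1 tendsto_id)
      simpa using ((hpow.inv_tendsto_atTop).const_mul (1/((s:ℝ)+1))).neg
    have h0 := integral_Ioi_of_hasDerivAt_of_nonneg' hder hnn htop
    unfold gammaKS
    simp only [pow_zero]
    rw [h0]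
    simp
  · -- part 1
    have hint : IntegrableOn (fun t : ℝ => Real.log t/(t+1)^(s+2)) (Ioi 0) := by
      have h1i : IntegrableOn (fun t : ℝ => Real.log t/(t+1)^(s+2)) (Ioi 1) :=
        integrableOn_Ioi_deriv_of_nonneg'
          (fun x hx => hasDerivAt_auxF s (lt_of_lt_of_le one_pos hx))
          (fun x hx => by
            have hx1 : (1:ℝ) < x := hx
            have hx0 : (0:ℝ) < x + 1 := by linarith
            exact div_nonneg (Real.log_nonneg hx1.le) (by positivity))
          (tendsto_auxF_atTop s)
      have h01 : IntegrableOn (fun t : ℝ => Real.log t/(t+1)^(s+2)) (Ioc 0 1) := by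
        have hg : IntegrableOn (fun t : ℝ => 2 * t ^ (-(1/2) : ℝ)) (Ioc 0 1) := by
          have h := (intervalIntegrable_iff_integrableOn_Ioc_of_le
            (zero_le_one)).mp (intervalIntegral.intervalIntegrable_rpow' (by norm_num : (-1:ℝ) < -(1/2)))
          exact h.const_mul 2
        refine hg.mono' ?_ ?_
        · exact (Real.measurable_log.div
            ((measurable_id.add_const 1).pow_const (s+2))).aestronglyMeasurable
        · rw [ae_restrict_iff' measurableSet_Ioc]
          refine Filter.Eventually.of_forall fun t ht => ?_
          obtain ⟨ht0, ht1⟩ := ht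
          have h1 : (1:ℝ) ≤ (t+1)^(s+2) := one_le_pow₀ (by linarith)
          have hlogle : |Real.log t| ≤ 2 * t ^ (-(1/2) : ℝ) := by
            have hneg : Real.log t ≤ 0 := Real.log_nonpos ht0.le ht1
            rw [abs_of_nonpos hneg, ← Real.log_inv]
            have := Real.log_le_rpow_div (inv_nonneg.2 ht0.le)
              (by norm_num : (0:ℝ) < 1/2)
            calc Real.log t⁻¹ ≤ (t⁻¹) ^ ((1:ℝ)/2) / (1/2) := this
            _ = 2 * (t⁻¹) ^ ((1:ℝ)/2) := by ring
            _ = 2 * t ^ (-(1/2) : ℝ) := by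
                rw [Real.inv_rpow ht0.le, ← Real.rpow_neg ht0.le]
          have hnorm : ‖Real.log t/(t+1)^(s+2)‖ ≤ |Real.log t| := by
            rw [Real.norm_eq_abs, abs_div]
            rw [abs_of_nonneg (by positivity : (0:ℝ) ≤ (t+1)^(s+2))]
            exact div_le_self (abs_nonneg _) h1
          exact hnorm.trans hlogle
      rw [← Ioc_union_Ioi_eq_Ioi (zero_le_one : (0:ℝ) ≤ 1)]
      exact h01.union h1i
    have hmain := integral_Ioi_of_hasDerivAt_of_tendsto (continuousWithinAt_auxF s)
      (fun x hx => hasDerivAt_auxF s hx) hint (tendsto_auxF_atTop s)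
    unfold gammaKS
    simp only [pow_one]
    rw [hmain, auxF_zero]
    ring
end

section
/- The constants γ_{k,s} = ∫₀^∞ (ln t)^k/(t+1)^{s+2} dt satisfy the recursion γ_{k,s} = ([1 + (-1)^k] k!/(s+1)) ∑_{i=1}^∞ (-1)^{i-1}/i^k - (k/(s+1)) ∑_{i=1}^s γ_{k-1, i-1} for k ≥ 1 and s ≥ 0. -/
open MeasureTheory

open Real Set Filter Topology

-- x^m ≤ m! * exp x for x ≥ 0
lemma pow_le_fact_exp (m : ℕ) {x : ℝ} (hx : 0 ≤ x) : x ^ m ≤ (m.factorial : ℝ) * Real.exp x := by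
  have h := Real.sum_le_exp_of_nonneg hx (m + 1)
  have h1 : x ^ m / (m.factorial : ℝ) ≤ Real.exp x := by
    refine le_trans ?_ h
    exact Finset.single_le_sum (f := fun i => x ^ i / (i.factorial : ℝ))
      (fun i _ => by positivity) (Finset.self_mem_range_succ m)
  have hm : (0:ℝ) < (m.factorial : ℝ) := by positivity
  calc x ^ m = x ^ m / (m.factorial:ℝ) * m.factorial := by field_simp
  _ ≤ Real.exp x * m.factorial := by gcongr
  _ = (m.factorial : ℝ) * Real.exp x := mul_comm _ _

-- |log t|^m ≤ m! 2^m t^(-1/2) for 0 < t ≤ 1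
lemma abs_log_pow_le_low (m : ℕ) {t : ℝ} (ht : 0 < t) (ht1 : t ≤ 1) :
    |Real.log t| ^ m ≤ (m.factorial : ℝ) * 2 ^ m * t ^ (-(1:ℝ)/2) := by
  have hl : |Real.log t| = -Real.log t := abs_of_nonpos (Real.log_nonpos ht.le ht1)
  have key := pow_le_fact_exp m (x := |Real.log t| / 2) (by positivity)
  have hexp : Real.exp (|Real.log t| / 2) = t ^ (-(1:ℝ)/2) := by
    rw [hl, Real.rpow_def_of_pos ht]
    ring_nf
  have : (|Real.log t| / 2) ^ m = |Real.log t| ^ m / 2 ^ m := by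
    rw [div_pow]
  rw [this, hexp] at key
  have h2 : (0:ℝ) < 2 ^ m := by positivity
  calc |Real.log t| ^ m = |Real.log t| ^ m / 2 ^ m * 2 ^ m := by field_simp
  _ ≤ (m.factorial : ℝ) * t ^ (-(1:ℝ)/2) * 2 ^ m := by gcongr
  _ = (m.factorial : ℝ) * 2 ^ m * t ^ (-(1:ℝ)/2) := by ring

-- (log t)^m ≤ m! 2^m t^(1/2) for 1 ≤ t
lemma log_pow_le_high (m : ℕ) {t : ℝ} (ht : 1 ≤ t) :
    Real.log t ^ m ≤ (m.factorial : ℝ) * 2 ^ m * t ^ ((1:ℝ)/2) := by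
  have ht0 : (0:ℝ) < t := lt_of_lt_of_le one_pos ht
  have hl : 0 ≤ Real.log t := Real.log_nonneg ht
  have key := pow_le_fact_exp m (x := Real.log t / 2) (by positivity)
  have hexp : Real.exp (Real.log t / 2) = t ^ ((1:ℝ)/2) := by
    rw [Real.rpow_def_of_pos ht0]; ring_nf
  have : (Real.log t / 2) ^ m = Real.log t ^ m / 2 ^ m := div_pow _ _ _
  rw [this, hexp] at key
  have h2 : (0:ℝ) < 2 ^ m := by positivity
  calc Real.log t ^ m = Real.log t ^ m / 2 ^ m * 2 ^ m := by field_simp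
  _ ≤ (m.factorial : ℝ) * t ^ ((1:ℝ)/2) * 2 ^ m := by gcongr
  _ = (m.factorial : ℝ) * 2 ^ m * t ^ ((1:ℝ)/2) := by ring

-- integrability of |log|^m on (0,1]
lemma integrableOn_abs_log_pow (m : ℕ) :
    IntegrableOn (fun t => |Real.log t| ^ m) (Ioc (0:ℝ) 1) := by
  have hmono : IntegrableOn (fun t : ℝ => (m.factorial : ℝ) * 2 ^ m * t ^ (-(1:ℝ)/2)) (Ioc (0:ℝ) 1) := by
    apply Integrable.const_mul
    exact (intervalIntegrable_iff_integrableOn_Ioc_of_le zero_le_one).mp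
      (intervalIntegral.intervalIntegrable_rpow' (by norm_num))
  refine hmono.mono' ?_ ?_
  · exact ((Real.measurable_log.abs.pow_const m).aestronglyMeasurable)
  · filter_upwards [ae_restrict_mem measurableSet_Ioc] with t ht
    rw [Real.norm_eq_abs, abs_of_nonneg (by positivity)]
    exact abs_log_pow_le_low m ht.1 ht.2

-- tendsto |log t|^M * t → 0 at 0+
lemma tendsto_abs_log_pow_mul_self (M : ℕ) :
    Tendsto (fun t : ℝ => |Real.log t| ^ M * t) (𝓝[>] (0:ℝ)) (𝓝 0) := by
  have h := (isLittleO_abs_log_rpow_rpow_nhdsGT_zero (M:ℝ)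
    (by norm_num : (-1:ℝ) < 0)).tendsto_div_nhds_zero
  refine h.congr' ?_
  filter_upwards [self_mem_nhdsWithin] with x hx
  have hx0 : (0:ℝ) < x := hx
  rw [Real.rpow_natCast, Real.rpow_neg_one]; field_simp

-- tendsto (log t)^M / t → 0 at ∞
lemma tendsto_log_pow_div_atTop (M : ℕ) :
    Tendsto (fun t : ℝ => Real.log t ^ M / t) atTop (𝓝 0) := by
  have h := (isLittleO_log_rpow_rpow_atTop (M:ℝ)
    (by norm_num : (0:ℝ) < 1)).tendsto_div_nhds_zero
  refine h.congr' ?_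
  filter_upwards [eventually_gt_atTop (0:ℝ)] with x hx
  rw [Real.rpow_natCast, Real.rpow_one]

lemma tendsto_abs_log_pow_mul_self_Icc (M : ℕ) :
    Tendsto (fun t : ℝ => |Real.log t| ^ M * t) (𝓝[Icc (0:ℝ) 1] 0) (𝓝 0) := by
  have hsub : Icc (0:ℝ) 1 ⊆ insert 0 (Ioi 0) := by
    intro x hx
    rcases eq_or_lt_of_le hx.1 with h | h
    · exact Or.inl h.symm
    · exact Or.inr h
  refine Tendsto.mono_left ?_ (nhdsWithin_mono _ hsub)
  rw [nhdsWithin_insert, tendsto_sup]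
  constructor
  · simpa [Real.log_zero] using tendsto_pure_nhds (fun t : ℝ => |Real.log t| ^ M * t) 0
  · exact tendsto_abs_log_pow_mul_self M

lemma continuousWithinAt_zero_aux {f : ℝ → ℝ} (M : ℕ) (C : ℝ) (hf0 : f 0 = 0)
    (hb : ∀ t ∈ Ioc (0:ℝ) 1, |f t| ≤ C * (|Real.log t| ^ M * t)) :
    ContinuousWithinAt f (Icc (0:ℝ) 1) 0 := by
  have hC : Tendsto (fun t : ℝ => C * (|Real.log t| ^ M * t)) (𝓝[Icc (0:ℝ) 1] 0) (𝓝 0) := by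
    simpa using (tendsto_abs_log_pow_mul_self_Icc M).const_mul C
  rw [ContinuousWithinAt, hf0]
  apply squeeze_zero_norm' _ hC
  filter_upwards [self_mem_nhdsWithin] with t ht
  rcases eq_or_lt_of_le ht.1 with h | h
  · simp [← h, hf0, Real.log_zero]
  · exact hb t ⟨h, ht.2⟩

-- integrable comparator at infinity
lemma integrableOn_log_pow_div_sq (m : ℕ) :
    IntegrableOn (fun t : ℝ => Real.log t ^ m / t ^ 2) (Ioi (1:ℝ)) := by
  have hmono : IntegrableOn (fun t : ℝ => (m.factorial : ℝ) * 2 ^ m * t ^ (-(3:ℝ)/2)) (Ioi (1:ℝ)) :=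
    (integrableOn_Ioi_rpow_of_lt (by norm_num) one_pos).const_mul _
  refine hmono.mono' ?_ ?_
  · exact ((Real.measurable_log.pow_const m).div ((measurable_id.pow_const 2))).aestronglyMeasurable
  · filter_upwards [ae_restrict_mem measurableSet_Ioi] with t ht
    have ht1 : (1:ℝ) ≤ t := le_of_lt ht
    have ht0 : (0:ℝ) < t := lt_of_lt_of_le one_pos ht1
    have hlog : 0 ≤ Real.log t := Real.log_nonneg ht1
    rw [Real.norm_eq_abs, abs_of_nonneg (by positivity)]
    have h1 : Real.log t ^ m ≤ (m.factorial : ℝ) * 2 ^ m * t ^ ((1:ℝ)/2) := log_pow_le_high m ht1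
    have h2 : Real.log t ^ m / t ^ 2 ≤ (m.factorial : ℝ) * 2 ^ m * t ^ ((1:ℝ)/2) / t ^ 2 := by
      gcongr
    refine h2.trans (le_of_eq ?_)
    rw [mul_div_assoc]
    congr 1
    rw [show (t:ℝ) ^ (2:ℕ) = t ^ (2:ℝ) by rw [← Real.rpow_natCast t 2]; norm_num,
      ← Real.rpow_sub ht0]
    norm_num

-- generic integrability from bound on (0,1]
lemma integrableOn_Ioc_of_bound {f : ℝ → ℝ} (m : ℕ) (C : ℝ)
    (hmeas : AEStronglyMeasurable f (volume.restrict (Ioc (0:ℝ) 1)))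
    (hb : ∀ t ∈ Ioc (0:ℝ) 1, |f t| ≤ C * |Real.log t| ^ m) :
    IntegrableOn f (Ioc (0:ℝ) 1) := by
  refine ((integrableOn_abs_log_pow m).const_mul C).mono' hmeas ?_
  filter_upwards [ae_restrict_mem measurableSet_Ioc] with t ht
  simpa [Real.norm_eq_abs] using hb t ht

-- generic integrability from bound on (1,∞)
lemma integrableOn_Ioi_of_bound {f : ℝ → ℝ} (m : ℕ) (C : ℝ)
    (hmeas : AEStronglyMeasurable f (volume.restrict (Ioi (1:ℝ))))
    (hb : ∀ t ∈ Ioi (1:ℝ), |f t| ≤ C * (Real.log t ^ m / t ^ 2)) :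
    IntegrableOn f (Ioi (1:ℝ)) := by
  refine ((integrableOn_log_pow_div_sq m).const_mul C).mono' hmeas ?_
  filter_upwards [ae_restrict_mem measurableSet_Ioi] with t ht
  simpa [Real.norm_eq_abs] using hb t ht

lemma integrableOn_A (m i : ℕ) :
    IntegrableOn (fun t : ℝ => Real.log t ^ m / (t+1) ^ i) (Ioc (0:ℝ) 1) := by
  refine integrableOn_Ioc_of_bound m 1 ?_ ?_
  · exact ((Real.measurable_log.pow_const m).div
      ((measurable_id.add_const 1).pow_const i)).aestronglyMeasurable
  · intro t ht
    have ht0 := ht.1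
    have h1 : (1:ℝ) ≤ (t+1) ^ i := one_le_pow₀ (by linarith)
    rw [one_mul, abs_div, abs_pow, abs_pow, abs_of_nonneg (by linarith : (0:ℝ) ≤ t+1)]
    exact div_le_self (by positivity) h1

lemma integrableOn_B (m p : ℕ) (hp : 2 ≤ p) :
    IntegrableOn (fun t : ℝ => Real.log t ^ m / (t+1) ^ p) (Ioi (1:ℝ)) := by
  refine integrableOn_Ioi_of_bound m 1 ?_ ?_
  · exact ((Real.measurable_log.pow_const m).div
      ((measurable_id.add_const 1).pow_const p)).aestronglyMeasurable
  · intro t ht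
    have ht1 : (1:ℝ) < t := ht
    have hlog : 0 ≤ Real.log t := Real.log_nonneg ht1.le
    have h1 : (t:ℝ) ^ 2 ≤ (t+1) ^ p := by
      calc (t:ℝ) ^ 2 ≤ (t+1) ^ 2 := by nlinarith
      _ ≤ (t+1) ^ p := pow_le_pow_right₀ (by linarith) hp
    rw [one_mul, abs_div, abs_pow, abs_pow, abs_of_nonneg (by linarith : (0:ℝ) ≤ t+1),
      abs_of_nonneg hlog]
    exact div_le_div_of_nonneg_left (by positivity) (by positivity) h1

lemma integrableOn_C (m s : ℕ) :
    IntegrableOn (fun t : ℝ => Real.log t ^ m / (t * (t+1) ^ (s+1))) (Ioi (1:ℝ)) := by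
  refine integrableOn_Ioi_of_bound m 1 ?_ ?_
  · exact ((Real.measurable_log.pow_const m).div
      (measurable_id.mul ((measurable_id.add_const 1).pow_const (s+1)))).aestronglyMeasurable
  · intro t ht
    have ht1 : (1:ℝ) < t := ht
    have hlog : 0 ≤ Real.log t := Real.log_nonneg ht1.le
    have h1 : (t:ℝ) ^ 2 ≤ t * (t+1) ^ (s+1) := by
      have : (t:ℝ) ≤ (t+1) ^ (s+1) := by
        calc (t:ℝ) ≤ t + 1 := by linarith
        _ ≤ (t+1) ^ (s+1) := le_self_pow₀ (by linarith) (by omega)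
      nlinarith
    rw [one_mul, abs_div, abs_pow, abs_of_nonneg hlog,
      abs_of_nonneg (by positivity : (0:ℝ) ≤ t * (t+1) ^ (s+1))]
    exact div_le_div_of_nonneg_left (by positivity) (by positivity) h1

lemma integrableOn_P (n m : ℕ) :
    IntegrableOn (fun t : ℝ => t ^ n * Real.log t ^ m) (Ioc (0:ℝ) 1) := by
  refine integrableOn_Ioc_of_bound m 1 ?_ ?_
  · exact ((measurable_id.pow_const n).mul (Real.measurable_log.pow_const m)).aestronglyMeasurable
  · intro t ht
    have ht0 := ht.1
    have htn : |t| ^ n ≤ 1 := by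
      rw [abs_of_pos ht0]
      exact pow_le_one₀ ht0.le ht.2
    rw [one_mul, abs_mul, abs_pow, abs_pow]
    calc |t| ^ n * |Real.log t| ^ m ≤ 1 * |Real.log t| ^ m := by gcongr
    _ = |Real.log t| ^ m := one_mul _

lemma integrableOn_main (m p : ℕ) (hp : 2 ≤ p) :
    IntegrableOn (fun t : ℝ => Real.log t ^ m / (t+1) ^ p) (Ioi (0:ℝ)) := by
  rw [← Ioc_union_Ioi_eq_Ioi (zero_le_one' ℝ)]
  exact (integrableOn_A m p).union (integrableOn_B m p hp)

lemma ident1 (s : ℕ) {t : ℝ} (ht : 0 < t) :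
    t * ∑ i ∈ Finset.Icc 1 (s+1), ((t+1) ^ i)⁻¹ = 1 - ((t+1) ^ (s+1))⁻¹ := by
  have ht1 : (0:ℝ) < t + 1 := by linarith
  induction s with
  | zero => simp; field_simp; ring
  | succ s ih =>
    rw [Finset.sum_Icc_succ_top (by omega : 1 ≤ s+2), mul_add, ih]
    have h1 : (t+1) ^ (s+1) ≠ 0 := by positivity
    have h2 : (t+1) ^ (s+2) ≠ 0 := by positivity
    field_simp
    ring

lemma ident2 (s : ℕ) {u : ℝ} (hu : 0 < u) :
    u ^ s / (1+u) ^ (s+1) = (1+u)⁻¹ - ∑ j ∈ Finset.range s, u ^ j / (1+u) ^ (j+2) := by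
  have hu1 : (0:ℝ) < 1 + u := by linarith
  induction s with
  | zero => simp
  | succ s ih =>
    rw [Finset.sum_range_succ]
    have h1 : (1+u) ^ (s+1) ≠ 0 := by positivity
    have h2 : (1+u) ^ (s+2) ≠ 0 := by positivity
    have : (∑ j ∈ Finset.range s, u ^ j / (1+u) ^ (j+2)) = (1+u)⁻¹ - u ^ s / (1+u) ^ (s+1) := by
      rw [ih]; ring
    rw [this]
    have hs2 : s + 1 + 1 = s + 2 := rfl
    rw [hs2, pow_succ, pow_succ]
    field_simp
    ring

lemma integral_pow_mul_log_pow (m n : ℕ) :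
    ∫ t in Ioc (0:ℝ) 1, t ^ n * Real.log t ^ m
      = (-1) ^ m * (m.factorial : ℝ) / ((n:ℝ)+1) ^ (m+1) := by
  induction m with
  | zero =>
    simp only [pow_zero, mul_one, Nat.factorial_zero, Nat.cast_one, one_mul, pow_one]
    rw [← intervalIntegral.integral_of_le zero_le_one, integral_pow]
    norm_num
  | succ m ih =>
    set F : ℝ → ℝ := fun t => t ^ (n+1) * Real.log t ^ (m+1) with hF
    set G : ℝ → ℝ := fun t =>
      ((n:ℝ)+1) * (t ^ n * Real.log t ^ (m+1)) + ((m:ℝ)+1) * (t ^ n * Real.log t ^ m) with hG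
    have hder : ∀ t ∈ Ioo (0:ℝ) 1, HasDerivAt F (G t) t := by
      intro t ht
      have ht0 : t ≠ 0 := ne_of_gt ht.1
      have h1 : HasDerivAt (fun x : ℝ => x ^ (n+1)) (((n:ℝ)+1) * t ^ n) t := by
        simpa using hasDerivAt_pow (n+1) t
      have h2 : HasDerivAt (fun x : ℝ => Real.log x ^ (m+1))
          (((m:ℝ)+1) * Real.log t ^ m * t⁻¹) t := by
        simpa using (Real.hasDerivAt_log ht0).fun_pow (m+1)
      have : HasDerivAt (fun x : ℝ => x ^ (n+1) * Real.log x ^ (m+1)) _ t := h1.fun_mul h2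
      convert this using 1
      rw [hG]
      field_simp
      ring
    have hcont : ContinuousOn F (Icc (0:ℝ) 1) := by
      intro x hx
      rcases eq_or_lt_of_le hx.1 with h | h
      · rw [← h]
        refine continuousWithinAt_zero_aux (m+1) 1 (by simp [hF]) ?_
        intro t ht
        rw [hF]
        simp only [abs_mul, abs_pow, one_mul]
        rw [abs_of_pos ht.1]
        calc t ^ (n+1) * |Real.log t| ^ (m+1) ≤ t ^ 1 * |Real.log t| ^ (m+1) :=
              mul_le_mul_of_nonneg_right
                (pow_le_pow_of_le_one ht.1.le ht.2 (by omega)) (by positivity)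
        _ = |Real.log t| ^ (m+1) * t := by ring
      · exact (((continuous_pow (n+1)).continuousAt).mul
          ((Real.continuousAt_log (ne_of_gt h)).pow (m+1))).continuousWithinAt
    have hint : IntegrableOn G (Ioc (0:ℝ) 1) :=
      (((integrableOn_P n (m+1)).const_mul _).add ((integrableOn_P n m).const_mul _))
    have hFTC : ∫ t in (0:ℝ)..1, G t = F 1 - F 0 :=
      intervalIntegral.integral_eq_sub_of_hasDerivAt_of_le zero_le_one hcont hder
        ((intervalIntegrable_iff_integrableOn_Ioc_of_le zero_le_one).mpr hint)
    rw [intervalIntegral.integral_of_le zero_le_one] at hFTC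
    have hF10 : F 1 - F 0 = 0 := by simp [hF]
    rw [hF10, hG] at hFTC
    rw [integral_add ((integrableOn_P n (m+1)).const_mul _)
      ((integrableOn_P n m).const_mul _), integral_const_mul, integral_const_mul, ih] at hFTC
    have hn1 : ((n:ℝ)+1) ≠ 0 := by positivity
    have key : ∫ t in Ioc (0:ℝ) 1, t ^ n * Real.log t ^ (m+1)
        = -(((m:ℝ)+1) * ((-1) ^ m * (m.factorial : ℝ) / ((n:ℝ)+1) ^ (m+1))) / ((n:ℝ)+1) := by
      field_simp at hFTC ⊢
      linarith
    rw [key, Nat.factorial_succ]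
    push_cast
    field_simp
    ring

lemma summable_aux (p : ℕ) (hp : 2 ≤ p) : Summable (fun n : ℕ => (1:ℝ) / ((n:ℝ)+1) ^ p) := by
  have h := (summable_nat_add_iff (f := fun n : ℕ => (1:ℝ) / (n:ℝ) ^ p) 1).mpr
    (summable_one_div_nat_pow.mpr hp)
  refine h.congr fun n => ?_
  push_cast
  ring_nf

lemma integral_log_pow_div_one_add (m : ℕ) (hm : 1 ≤ m) :
    ∫ t in Ioc (0:ℝ) 1, Real.log t ^ m / (t+1)
      = (-1:ℝ)^m * (m.factorial : ℝ) * ∑' n : ℕ, (-1:ℝ)^n / ((n:ℝ)+1)^(m+1) := by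
  rw [integral_Ioc_eq_integral_Ioo]
  set F : ℕ → ℝ → ℝ := fun n t => (-1:ℝ)^n * (t ^ n * Real.log t ^ m) with hFdef
  have hF_int : ∀ n, IntegrableOn (F n) (Ioo (0:ℝ) 1) := fun n =>
    ((integrableOn_P n m).mono_set Ioo_subset_Ioc_self).const_mul _
  have hval : ∀ n, ∫ t in Ioo (0:ℝ) 1, ‖F n t‖ = (m.factorial : ℝ) / ((n:ℝ)+1) ^ (m+1) := by
    intro n
    have hcongr : ∫ t in Ioo (0:ℝ) 1, ‖F n t‖
        = ∫ t in Ioo (0:ℝ) 1, (-1:ℝ)^m * (t ^ n * Real.log t ^ m) := by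
      refine setIntegral_congr_fun measurableSet_Ioo fun t ht => ?_
      have h1 : Real.log t < 0 := Real.log_neg ht.1 ht.2
      rw [hFdef]
      simp only [Real.norm_eq_abs, abs_mul, abs_pow, abs_neg, abs_one, one_pow, one_mul,
        abs_of_pos ht.1, abs_of_neg h1]
      rw [neg_pow]
      ring
    rw [hcongr, integral_const_mul, ← integral_Ioc_eq_integral_Ioo, integral_pow_mul_log_pow,
      mul_div_assoc, ← mul_assoc, ← mul_pow]
    norm_num
  have hF_sum : Summable fun n => ∫ t in Ioo (0:ℝ) 1, ‖F n t‖ := by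
    rw [funext hval]
    exact ((summable_aux (m+1) (by omega)).mul_left _).congr (fun n => by rw [mul_one_div])
  have hswap := integral_tsum_of_summable_integral_norm hF_int hF_sum
  have hpt : ∀ t ∈ Ioo (0:ℝ) 1, (∑' n, F n t) = Real.log t ^ m / (t+1) := by
    intro t ht
    have hnorm : ‖-t‖ < 1 := by
      rw [norm_neg, Real.norm_eq_abs, abs_of_pos ht.1]; exact ht.2
    have hgeom : ∑' n : ℕ, (-t) ^ n = (1 - (-t))⁻¹ := tsum_geometric_of_norm_lt_one hnorm
    have : (∑' n, F n t) = (∑' n : ℕ, (-t) ^ n * Real.log t ^ m) := by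
      refine tsum_congr fun n => ?_
      rw [hFdef, neg_pow]; ring
    rw [this, tsum_mul_right, hgeom]
    rw [sub_neg_eq_add]
    field_simp [add_comm]
    ring
  have hcongr2 : ∫ t in Ioo (0:ℝ) 1, (∑' n, F n t)
      = ∫ t in Ioo (0:ℝ) 1, Real.log t ^ m / (t+1) :=
    setIntegral_congr_fun measurableSet_Ioo hpt
  rw [← hcongr2, ← hswap]
  have hterm : ∀ n : ℕ, (∫ t in Ioo (0:ℝ) 1, F n t)
      = ((-1:ℝ)^m * (m.factorial : ℝ)) * ((-1:ℝ)^n / ((n:ℝ)+1)^(m+1)) := by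
    intro n
    rw [hFdef]
    simp only
    rw [integral_const_mul, ← integral_Ioc_eq_integral_Ioo, integral_pow_mul_log_pow]
    ring
  rw [funext hterm, tsum_mul_left]

lemma IBP1 (m s : ℕ) :
    ((s:ℝ)+1) * ∫ t in Ioc (0:ℝ) 1, Real.log t ^ (m+1) / (t+1) ^ (s+2)
      = -((m:ℝ)+1) * ∑ i ∈ Finset.Icc 1 (s+1),
          ∫ t in Ioc (0:ℝ) 1, Real.log t ^ m / (t+1) ^ i := by
  set F : ℝ → ℝ := fun t => Real.log t ^ (m+1) * (1 - (((t:ℝ)+1) ^ (s+1))⁻¹) with hFdef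
  set G : ℝ → ℝ := fun t =>
    ((m:ℝ)+1) * (Real.log t ^ m * ∑ i ∈ Finset.Icc 1 (s+1), (((t:ℝ)+1) ^ i)⁻¹)
      + ((s:ℝ)+1) * (Real.log t ^ (m+1) / (t+1) ^ (s+2)) with hGdef
  have hsum_eq : ∀ t : ℝ, (fun t : ℝ => Real.log t ^ m * ∑ i ∈ Finset.Icc 1 (s+1),
      (((t:ℝ)+1) ^ i)⁻¹) t = ∑ i ∈ Finset.Icc 1 (s+1), Real.log t ^ m / ((t:ℝ)+1) ^ i := by
    intro t
    simp only [Finset.mul_sum, div_eq_mul_inv]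
  have hint_sum : IntegrableOn (fun t : ℝ => Real.log t ^ m *
      ∑ i ∈ Finset.Icc 1 (s+1), (((t:ℝ)+1) ^ i)⁻¹) (Ioc (0:ℝ) 1) := by
    rw [show (fun t : ℝ => Real.log t ^ m * ∑ i ∈ Finset.Icc 1 (s+1), (((t:ℝ)+1) ^ i)⁻¹)
        = fun t : ℝ => ∑ i ∈ Finset.Icc 1 (s+1), Real.log t ^ m / ((t:ℝ)+1) ^ i
      from funext hsum_eq]
    exact integrable_finset_sum _ fun i _ => integrableOn_A m i
  have hint : IntegrableOn G (Ioc (0:ℝ) 1) :=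
    (hint_sum.const_mul _).add ((integrableOn_A (m+1) (s+2)).const_mul _)
  have hder : ∀ t ∈ Ioo (0:ℝ) 1, HasDerivAt F (G t) t := by
    intro t ht
    have ht0 : t ≠ 0 := ne_of_gt ht.1
    have ht1 : (0:ℝ) < t + 1 := by linarith [ht.1]
    have hne : ((t:ℝ)+1) ^ (s+1) ≠ 0 := by positivity
    have h2 : HasDerivAt (fun x : ℝ => Real.log x ^ (m+1))
        (((m:ℝ)+1) * Real.log t ^ m * t⁻¹) t := by
      simpa using (Real.hasDerivAt_log ht0).fun_pow (m+1)
    have hbase : HasDerivAt (fun x : ℝ => ((x:ℝ)+1) ^ (s+1))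
        (((s:ℝ)+1) * ((t:ℝ)+1) ^ s) t := by
      simpa using ((hasDerivAt_id t).add_const 1).fun_pow (s+1)
    have h3 : HasDerivAt (fun x : ℝ => 1 - (((x:ℝ)+1) ^ (s+1))⁻¹)
        (((s:ℝ)+1) * ((t:ℝ)+1) ^ s / (((t:ℝ)+1) ^ (s+1)) ^ 2) t := by
      have : HasDerivAt (fun x : ℝ => 1 - (((x:ℝ)+1) ^ (s+1))⁻¹) _ t :=
        (hbase.fun_inv hne).const_sub 1
      convert this using 1
      field_simp
    have : HasDerivAt (fun x : ℝ => Real.log x ^ (m+1) * (1 - (((x:ℝ)+1) ^ (s+1))⁻¹)) _ t :=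
      h2.fun_mul h3
    convert this using 1
    rw [hGdef]
    simp only
    have hi := ident1 s ht.1
    have hsum : (∑ i ∈ Finset.Icc 1 (s+1), (((t:ℝ)+1) ^ i)⁻¹)
        = (1 - (((t:ℝ)+1) ^ (s+1))⁻¹) / t := by
      rw [eq_div_iff ht0, mul_comm]
      exact hi
    rw [hsum]
    have hpow : (((t:ℝ)+1) ^ (s+1)) ^ 2 = ((t:ℝ)+1) ^ (2*s+2) := by
      rw [← pow_mul]; ring_nf
    field_simp
    ring
  have hcont : ContinuousOn F (Icc (0:ℝ) 1) := by
    intro x hx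
    rcases eq_or_lt_of_le hx.1 with h | h
    · rw [← h]
      refine continuousWithinAt_zero_aux (m+1) ((s:ℝ)+1) (by simp [hFdef]) ?_
      intro t ht
      have ht1 : (0:ℝ) < t + 1 := by linarith [ht.1]
      have hi := ident1 s ht.1
      have hbound : 1 - (((t:ℝ)+1) ^ (s+1))⁻¹ ≤ ((s:ℝ)+1) * t := by
        rw [← hi]
        have : (∑ i ∈ Finset.Icc 1 (s+1), (((t:ℝ)+1) ^ i)⁻¹) ≤ ((s:ℝ)+1) := by
          calc (∑ i ∈ Finset.Icc 1 (s+1), (((t:ℝ)+1) ^ i)⁻¹)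
              ≤ ∑ i ∈ Finset.Icc 1 (s+1), (1:ℝ) := by
                refine Finset.sum_le_sum fun i _ => ?_
                rw [inv_le_one_iff₀]
                right
                exact one_le_pow₀ (by linarith [ht.1])
          _ = ((s:ℝ)+1) := by simp [Nat.card_Icc]
        calc t * (∑ i ∈ Finset.Icc 1 (s+1), (((t:ℝ)+1) ^ i)⁻¹) ≤ t * ((s:ℝ)+1) :=
              mul_le_mul_of_nonneg_left this ht.1.le
        _ = ((s:ℝ)+1) * t := mul_comm _ _
      have hnn : 0 ≤ 1 - (((t:ℝ)+1) ^ (s+1))⁻¹ := by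
        have : (((t:ℝ)+1) ^ (s+1))⁻¹ ≤ 1 := by
          rw [inv_le_one_iff₀]; right; exact one_le_pow₀ (by linarith [ht.1])
        linarith
      rw [hFdef]
      simp only [abs_mul, abs_pow]
      rw [abs_of_nonneg hnn]
      calc |Real.log t| ^ (m+1) * (1 - (((t:ℝ)+1) ^ (s+1))⁻¹)
          ≤ |Real.log t| ^ (m+1) * (((s:ℝ)+1) * t) :=
            mul_le_mul_of_nonneg_left hbound (by positivity)
      _ = ((s:ℝ)+1) * (|Real.log t| ^ (m+1) * t) := by ring
    · have hx1 : (0:ℝ) < x + 1 := by linarith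
      have hne : ((x:ℝ)+1) ^ (s+1) ≠ 0 := by positivity
      exact (((Real.continuousAt_log (ne_of_gt h)).pow (m+1)).mul
        ((((continuousAt_id.add continuousAt_const).pow (s+1)).inv₀ hne).const_sub 1)).continuousWithinAt
  have hFTC : ∫ t in (0:ℝ)..1, G t = F 1 - F 0 :=
    intervalIntegral.integral_eq_sub_of_hasDerivAt_of_le zero_le_one hcont hder
      ((intervalIntegrable_iff_integrableOn_Ioc_of_le zero_le_one).mpr hint)
  rw [intervalIntegral.integral_of_le zero_le_one] at hFTC
  have hF10 : F 1 - F 0 = 0 := by simp [hFdef]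
  rw [hF10, hGdef] at hFTC
  rw [integral_add (hint_sum.const_mul _) ((integrableOn_A (m+1) (s+2)).const_mul _),
    integral_const_mul, integral_const_mul] at hFTC
  rw [setIntegral_congr_fun measurableSet_Ioc (fun t _ => hsum_eq t),
    integral_finset_sum _ (fun i _ => integrableOn_A m i)] at hFTC
  linarith

lemma IBP2 (m s : ℕ) :
    ((s:ℝ)+1) * ∫ t in Ioi (1:ℝ), Real.log t ^ (m+1) / (t+1) ^ (s+2)
      = ((m:ℝ)+1) * ∫ t in Ioi (1:ℝ), Real.log t ^ m / (t * (t+1) ^ (s+1)) := by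
  set F : ℝ → ℝ := fun t => -(Real.log t ^ (m+1) * (((t:ℝ)+1) ^ (s+1))⁻¹) with hFdef
  set G : ℝ → ℝ := fun t =>
    ((s:ℝ)+1) * (Real.log t ^ (m+1) / (t+1) ^ (s+2))
      - ((m:ℝ)+1) * (Real.log t ^ m / (t * (t+1) ^ (s+1))) with hGdef
  have hint1 : IntegrableOn (fun t : ℝ => Real.log t ^ (m+1) / (t+1) ^ (s+2)) (Ioi (1:ℝ)) :=
    integrableOn_B (m+1) (s+2) (by omega)
  have hint2 : IntegrableOn (fun t : ℝ => Real.log t ^ m / (t * (t+1) ^ (s+1))) (Ioi (1:ℝ)) :=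
    integrableOn_C m s
  have hint : IntegrableOn G (Ioi (1:ℝ)) := (hint1.const_mul _).sub (hint2.const_mul _)
  have hder : ∀ t ∈ Ioi (1:ℝ), HasDerivAt F (G t) t := by
    intro t ht
    have ht1 : (1:ℝ) < t := ht
    have ht0 : t ≠ 0 := by positivity
    have htp : (0:ℝ) < t + 1 := by linarith
    have hne : ((t:ℝ)+1) ^ (s+1) ≠ 0 := by positivity
    have h2 : HasDerivAt (fun x : ℝ => Real.log x ^ (m+1))
        (((m:ℝ)+1) * Real.log t ^ m * t⁻¹) t := by
      simpa using (Real.hasDerivAt_log ht0).fun_pow (m+1)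
    have hbase : HasDerivAt (fun x : ℝ => ((x:ℝ)+1) ^ (s+1))
        (((s:ℝ)+1) * ((t:ℝ)+1) ^ s) t := by
      simpa using ((hasDerivAt_id t).add_const 1).fun_pow (s+1)
    have h3 : HasDerivAt (fun x : ℝ => (((x:ℝ)+1) ^ (s+1))⁻¹)
        (-(((s:ℝ)+1) * ((t:ℝ)+1) ^ s) / (((t:ℝ)+1) ^ (s+1)) ^ 2) t := hbase.inv hne
    have : HasDerivAt (fun x : ℝ => -(Real.log x ^ (m+1) * (((x:ℝ)+1) ^ (s+1))⁻¹)) _ t :=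
      (h2.fun_mul h3).fun_neg
    convert this using 1
    rw [hGdef]
    simp only
    have hpow : (((t:ℝ)+1) ^ (s+1)) ^ 2 = ((t:ℝ)+1) ^ (2*s+2) := by
      rw [← pow_mul]; ring_nf
    field_simp
    ring
  have htend : Tendsto F atTop (𝓝 0) := by
    apply squeeze_zero_norm' _ (tendsto_log_pow_div_atTop (m+1))
    filter_upwards [eventually_ge_atTop (1:ℝ)] with t ht
    have ht0 : (0:ℝ) < t := by linarith
    have hlog : 0 ≤ Real.log t := Real.log_nonneg ht
    have h1 : (((t:ℝ)+1) ^ (s+1))⁻¹ ≤ t⁻¹ := by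
      apply inv_anti₀ ht0
      calc (t:ℝ) ≤ t + 1 := by linarith
      _ ≤ ((t:ℝ)+1) ^ (s+1) := le_self_pow₀ (by linarith) (by omega)
    rw [hFdef]
    simp only [norm_neg, Real.norm_eq_abs, abs_mul, abs_pow, abs_of_nonneg hlog,
      abs_of_nonneg (by positivity : (0:ℝ) ≤ (((t:ℝ)+1) ^ (s+1))⁻¹)]
    rw [div_eq_mul_inv]
    exact mul_le_mul_of_nonneg_left h1 (by positivity)
  have hcont : ContinuousWithinAt F (Ici (1:ℝ)) 1 := by
    have : ContinuousAt F 1 := by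
      have hne : ((1:ℝ)+1) ^ (s+1) ≠ 0 := by positivity
      exact (((Real.continuousAt_log one_ne_zero).pow (m+1)).mul
        (((continuousAt_id.add continuousAt_const).pow (s+1)).inv₀ hne)).neg
    exact this.continuousWithinAt
  have hFTC := integral_Ioi_of_hasDerivAt_of_tendsto hcont hder hint htend
  have hF1 : F 1 = 0 := by simp [hFdef]
  rw [hF1, sub_zero, hGdef] at hFTC
  rw [integral_sub (hint1.const_mul _) (hint2.const_mul _),
    integral_const_mul, integral_const_mul] at hFTC
  linarith

lemma sub_inv (g : ℝ → ℝ) :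
    ∫ t in Ioi (1:ℝ), g t = ∫ u in Ioo (0:ℝ) 1, ((u:ℝ)^2)⁻¹ * g u⁻¹ := by
  have himg : Ioi (1:ℝ) = (fun u : ℝ => u⁻¹) '' (Ioo 0 1) := by
    ext y
    simp only [mem_Ioi, mem_image, mem_Ioo]
    constructor
    · intro hy
      exact ⟨y⁻¹, ⟨inv_pos.mpr (by linarith), inv_lt_one_of_one_lt₀ hy⟩, inv_inv y⟩
    · rintro ⟨x, ⟨hx0, hx1⟩, rfl⟩
      exact one_lt_inv_iff₀.mpr ⟨hx0, hx1⟩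
  have hder : ∀ x ∈ Ioo (0:ℝ) 1, HasDerivWithinAt (fun u : ℝ => u⁻¹) (-((x:ℝ)^2)⁻¹) (Ioo 0 1) x :=
    fun x hx => (hasDerivAt_inv (ne_of_gt hx.1)).hasDerivWithinAt
  have hinj : InjOn (fun u : ℝ => u⁻¹) (Ioo 0 1) := fun a _ b _ h => inv_injective h
  rw [himg, integral_image_eq_integral_abs_deriv_smul measurableSet_Ioo hder hinj g]
  refine setIntegral_congr_fun measurableSet_Ioo fun x hx => ?_
  rw [abs_neg, abs_of_pos (inv_pos.mpr (pow_pos hx.1 2)), smul_eq_mul]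

lemma SUB1 (m s : ℕ) :
    ∫ t in Ioi (1:ℝ), Real.log t ^ m / (t * (t+1) ^ (s+1))
      = (-1:ℝ)^m * ∫ u in Ioo (0:ℝ) 1, Real.log u ^ m * u ^ s / (1+u) ^ (s+1) := by
  rw [sub_inv, ← integral_const_mul]
  refine setIntegral_congr_fun measurableSet_Ioo fun u hu => ?_
  have hu0 : (0:ℝ) < u := hu.1
  have h1u : (0:ℝ) < 1 + u := by linarith
  have hinv : u⁻¹ + 1 = (1+u)/u := by field_simp
  rw [Real.log_inv, hinv, div_pow,
    show (-Real.log u)^m = (-1:ℝ)^m * Real.log u^m from neg_pow _ _]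
  field_simp
  ring
lemma SUB2 (m j : ℕ) :
    ∫ u in Ioo (0:ℝ) 1, Real.log u ^ m * u ^ j / (1+u) ^ (j+2)
      = (-1:ℝ)^m * ∫ t in Ioi (1:ℝ), Real.log t ^ m / (t+1) ^ (j+2) := by
  rw [sub_inv, ← integral_const_mul]
  refine setIntegral_congr_fun measurableSet_Ioo fun u hu => ?_
  have hu0 : (0:ℝ) < u := hu.1
  have h1u : (0:ℝ) < 1 + u := by linarith
  have hinv : u⁻¹ + 1 = (1+u)/u := by field_simp
  rw [Real.log_inv, hinv, div_pow,
    show (-Real.log u)^m = (-1:ℝ)^m * Real.log u^m from neg_pow _ _]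
  have hsq : (-1:ℝ)^m * (-1:ℝ)^m = 1 := by
    rw [← pow_add, show m+m = 2*m from by ring, pow_mul]; norm_num
  rw [show (-1:ℝ)^m * ((((u:ℝ)^2)⁻¹ * ((-1:ℝ)^m * Real.log u^m / ((1+u)^(j+2)/u^(j+2)))))
      = ((-1:ℝ)^m*(-1:ℝ)^m) * (((u:ℝ)^2)⁻¹ * (Real.log u^m/((1+u)^(j+2)/u^(j+2)))) from by ring,
    hsq, one_mul]
  field_simp
  ring

lemma gamma_split (m s' : ℕ) :
    gammaKS m s' = (∫ t in Ioc (0:ℝ) 1, Real.log t ^ m / (t+1) ^ (s'+2))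
      + ∫ t in Ioi (1:ℝ), Real.log t ^ m / (t+1) ^ (s'+2) := by
  rw [gammaKS, ← Ioc_union_Ioi_eq_Ioi (zero_le_one' ℝ),
    setIntegral_union (Ioc_disjoint_Ioi le_rfl) measurableSet_Ioi
      (integrableOn_A m (s'+2)) (integrableOn_B m (s'+2) (by omega))]

lemma integrableOn_D (m j : ℕ) :
    IntegrableOn (fun u : ℝ => Real.log u ^ m * u ^ j / (1+u) ^ (j+2)) (Ioo (0:ℝ) 1) := by
  refine (integrableOn_Ioc_of_bound m 1 ?_ ?_).mono_set Ioo_subset_Ioc_self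
  · exact (((Real.measurable_log.pow_const m).mul (measurable_id.pow_const j)).div
      ((measurable_const.add measurable_id).pow_const (j+2))).aestronglyMeasurable
  · intro t ht
    have ht0 := ht.1
    have h1 : (1:ℝ) ≤ (1+t) ^ (j+2) := one_le_pow₀ (by linarith)
    have h2 : |t| ^ j ≤ 1 := by
      rw [abs_of_pos ht0]; exact pow_le_one₀ ht0.le ht.2
    rw [one_mul, abs_div, abs_mul, abs_pow, abs_pow, abs_pow,
      abs_of_nonneg (by linarith : (0:ℝ) ≤ 1+t)]
    calc |Real.log t| ^ m * |t| ^ j / (1+t) ^ (j+2)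
        ≤ |Real.log t| ^ m * |t| ^ j := div_le_self (by positivity) h1
      _ ≤ |Real.log t| ^ m * 1 := mul_le_mul_of_nonneg_left h2 (by positivity)
      _ = |Real.log t| ^ m := mul_one _

lemma ident2' (m s : ℕ) {u : ℝ} (hu : 0 < u) :
    Real.log u ^ m * u ^ s / (1+u) ^ (s+1)
      = Real.log u ^ m / (u+1)
        - ∑ j ∈ Finset.range s, Real.log u ^ m * u ^ j / (1+u) ^ (j+2) := by
  have h := ident2 s hu
  have h1u : (0:ℝ) < 1 + u := by linarith
  calc Real.log u ^ m * u ^ s / (1+u) ^ (s+1)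
      = Real.log u ^ m * (u ^ s / (1+u) ^ (s+1)) := by ring
    _ = Real.log u ^ m * ((1+u)⁻¹ - ∑ j ∈ Finset.range s, u ^ j / (1+u) ^ (j+2)) := by rw [h]
    _ = Real.log u ^ m / (u+1)
        - ∑ j ∈ Finset.range s, Real.log u ^ m * u ^ j / (1+u) ^ (j+2) := by
        rw [mul_sub, Finset.mul_sum]
        congr 1
        · rw [add_comm u 1]; ring
        · exact Finset.sum_congr rfl fun j _ => by ring

lemma reindex (f : ℕ → ℝ) (s : ℕ) :
    ∑ i ∈ Finset.Icc 1 s, f (i-1) = ∑ j ∈ Finset.range s, f j := by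
  induction s with
  | zero => simp
  | succ s ih =>
    rw [Finset.sum_Icc_succ_top (by omega : 1 ≤ s+1), Finset.sum_range_succ, ih]
    norm_num

lemma reindex2 (f : ℕ → ℝ) (s : ℕ) :
    ∑ i ∈ Finset.Icc 1 (s+1), f i = f 1 + ∑ j ∈ Finset.range s, f (j+2) := by
  induction s with
  | zero => simp
  | succ s ih =>
    rw [show s+1+1 = (s+1)+1 from rfl, Finset.sum_Icc_succ_top (by omega : 1 ≤ s+2), ih,
      Finset.sum_range_succ]
    ring

lemma main_ident (m s : ℕ) :
    gammaKS (m+1) s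
      = ((m:ℝ)+1)/((s:ℝ)+1) * (((-1:ℝ)^m - 1)
            * ∫ t in Ioc (0:ℝ) 1, Real.log t ^ m / (t+1))
        - ((m:ℝ)+1)/((s:ℝ)+1) * ∑ j ∈ Finset.range s, gammaKS m j := by
  have hs1 : ((s:ℝ)+1) ≠ 0 := by positivity
  set A1 : ℝ := ∫ t in Ioc (0:ℝ) 1, Real.log t ^ m / (t+1) with hA1
  set Bf : ℕ → ℝ := fun i => ∫ t in Ioi (1:ℝ), Real.log t ^ m / (t+1) ^ i with hBf
  set Af : ℕ → ℝ := fun i => ∫ t in Ioc (0:ℝ) 1, Real.log t ^ m / (t+1) ^ i with hAf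
  have h1 := IBP1 m s
  have h2 := IBP2 m s
  have h3 := SUB1 m s
  -- the Ioo-integral of the substituted integrand
  have hintA1 : IntegrableOn (fun u : ℝ => Real.log u ^ m / (u+1)) (Ioo (0:ℝ) 1) := by
    have := integrableOn_A m 1
    simp only [pow_one] at this
    exact this.mono_set Ioo_subset_Ioc_self
  have h4 : (∫ u in Ioo (0:ℝ) 1, Real.log u ^ m * u ^ s / (1+u) ^ (s+1))
      = A1 - ∑ j ∈ Finset.range s, (-1:ℝ)^m * Bf (j+2) := by
    rw [setIntegral_congr_fun measurableSet_Ioo (fun u hu => ident2' m s hu.1)]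
    rw [integral_sub hintA1 (integrable_finset_sum _ fun j _ => integrableOn_D m j),
      integral_finset_sum _ fun j _ => integrableOn_D m j]
    congr 1
    · rw [hA1, integral_Ioc_eq_integral_Ioo]
    · exact Finset.sum_congr rfl fun j _ => SUB2 m j
  have hsq : (-1:ℝ)^m * (-1:ℝ)^m = 1 := by
    rw [← pow_add, show m+m = 2*m from by ring, pow_mul]; norm_num
  -- combine with IBP2
  have hB : ((s:ℝ)+1) * (∫ t in Ioi (1:ℝ), Real.log t ^ (m+1) / (t+1) ^ (s+2))
      = ((m:ℝ)+1) * ((-1:ℝ)^m * A1 - ∑ j ∈ Finset.range s, Bf (j+2)) := by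
    rw [h2, h3, h4]
    rw [mul_sub, Finset.mul_sum]
    congr 2
    refine Finset.sum_congr rfl fun j _ => ?_
    rw [← mul_assoc, hsq, one_mul]
  -- IBP1 rewritten
  have hA : ((s:ℝ)+1) * (∫ t in Ioc (0:ℝ) 1, Real.log t ^ (m+1) / (t+1) ^ (s+2))
      = -((m:ℝ)+1) * (A1 + ∑ j ∈ Finset.range s, Af (j+2)) := by
    rw [h1]
    congr 1
    rw [show (∑ i ∈ Finset.Icc 1 (s+1), ∫ t in Ioc (0:ℝ) 1, Real.log t ^ m / (t+1) ^ i)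
        = ∑ i ∈ Finset.Icc 1 (s+1), Af i from rfl, reindex2 Af s]
    congr 1
    rw [hAf, hA1]
    simp only
    exact setIntegral_congr_fun measurableSet_Ioc fun t _ => by norm_num
  have hgamma : gammaKS (m+1) s
      = (∫ t in Ioc (0:ℝ) 1, Real.log t ^ (m+1) / (t+1) ^ (s+2))
        + ∫ t in Ioi (1:ℝ), Real.log t ^ (m+1) / (t+1) ^ (s+2) := gamma_split (m+1) s
  have hsplit : ∀ j, gammaKS m j = Af (j+2) + Bf (j+2) := fun j => gamma_split m j
  have htotal : ((s:ℝ)+1) * gammaKS (m+1) s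
      = ((m:ℝ)+1) * (((-1:ℝ)^m - 1) * A1) - ((m:ℝ)+1) * ∑ j ∈ Finset.range s, gammaKS m j := by
    rw [hgamma, mul_add, hA, hB]
    rw [show (∑ j ∈ Finset.range s, gammaKS m j)
        = ∑ j ∈ Finset.range s, (Af (j+2) + Bf (j+2)) from
      Finset.sum_congr rfl fun j _ => hsplit j]
    rw [Finset.sum_add_distrib]
    ring
  field_simp at htotal ⊢
  linarith

/-- Recursion
`γ_{k,s} = ([1+(-1)^k] k!/(s+1)) ∑_{i≥1} (-1)^{i-1}/i^k - (k/(s+1)) ∑_{i=1}^s γ_{k-1,i-1}`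
for `k ≥ 1`. -/
theorem stmt_18 (k s : ℕ) (hk : 1 ≤ k) :
    gammaKS k s =
      ((1 + (-1 : ℝ) ^ k) * (k.factorial : ℝ) / ((s : ℝ) + 1)) *
        (∑' i : ℕ, (-1 : ℝ) ^ i / ((i : ℝ) + 1) ^ k) -
      ((k : ℝ) / ((s : ℝ) + 1)) * ∑ i ∈ Finset.Icc 1 s, gammaKS (k - 1) (i - 1) := by
  obtain ⟨m, rfl⟩ : ∃ m, k = m + 1 := ⟨k-1, by omega⟩
  have hre : ∑ i ∈ Finset.Icc 1 s, gammaKS (m+1-1) (i-1) = ∑ j ∈ Finset.range s, gammaKS m j := by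
    simp only [Nat.add_sub_cancel]
    exact reindex (gammaKS m) s
  rw [hre, main_ident m s]
  rcases Nat.even_or_odd m with hm | hm
  · have h1 : (-1:ℝ)^m = 1 := hm.neg_one_pow
    have h2 : (-1:ℝ)^(m+1) = -1 := by rw [pow_succ, h1]; ring
    rw [h1, h2]
    push_cast
    ring
  · have hm1 : 1 ≤ m := hm.pos
    have h1 : (-1:ℝ)^m = -1 := hm.neg_one_pow
    have h2 : (-1:ℝ)^(m+1) = 1 := by rw [pow_succ, h1]; ring
    rw [h1, h2, integral_log_pow_div_one_add m hm1, h1, Nat.factorial_succ]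
    push_cast
    ring
end
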